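/- arXiv:1402.4276 — 4 statements merged into one kernel-verified Lean document; each statement's English description precedes it below -/
import Mathlib

section
/- Let Ω be a nonempty open subset of ℝⁿ and let F be a Taylorian 1-field on Ω (i.e. Γ¹(F;Ω) < +∞). Suppose there exist a, b ∈ Ω with a ≠ b such that Γ¹(F;a,b) = Γ¹(F;Ω). Then Γ¹(F;Ω) = Lip(Df;Ω). -/
noncomputable section

open scoped RealInnerProductSpace

section GammaDefs

variable {H : Type*} [NormedAddCommGroup H] [InnerProductSpace ℝ H]

/-- Evaluation of the first-degree polynomial `F(x)` at `a`:
`F(x)(a) = f_x + ⟨D_xf, a - x⟩`. -/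
def fieldEval (f : H → ℝ) (Df : H → H) (x a : H) : ℝ :=
  f x + ⟪Df x, a - x⟫

/-- `Γ¹(F; x, y) = 2 · sup_{a} |F(x)(a) - F(y)(a)| / (‖x-a‖² + ‖y-a‖²)` for `x ≠ y`. -/
def gammaPair (f : H → ℝ) (Df : H → H) (x y : H) : ℝ :=
  ⨆ a : H, 2 * |fieldEval f Df x a - fieldEval f Df y a| / (‖x - a‖ ^ 2 + ‖y - a‖ ^ 2)

/-- The set of values `Γ¹(F; x, y)` for `x ≠ y` ranging over `S`. -/
def gammaVals (f : H → ℝ) (Df : H → H) (S : Set H) : Set ℝ :=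
  {t | ∃ x ∈ S, ∃ y ∈ S, x ≠ y ∧ t = gammaPair f Df x y}

/-- `Γ¹(F; S) = sup_{x ≠ y ∈ S} Γ¹(F; x, y)` (real supremum, `0` if `S` has at most one point). -/
def gammaOn (f : H → ℝ) (Df : H → H) (S : Set H) : ℝ :=
  sSup (gammaVals f Df S)

end GammaDefs

section LipDefs

variable {α β : Type*} [NormedAddCommGroup α] [NormedAddCommGroup β]

/-- The set of difference quotients `‖g x - g y‖ / ‖x - y‖`, `x ≠ y ∈ S`. -/
def lipVals (g : α → β) (S : Set α) : Set ℝ :=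
  {t | ∃ x ∈ S, ∃ y ∈ S, x ≠ y ∧ t = ‖g x - g y‖ / ‖x - y‖}

/-- `Lip(g; S) = sup_{x ≠ y ∈ S} ‖g x - g y‖ / ‖x - y‖` (real supremum). -/
def lipOn (g : α → β) (S : Set α) : ℝ :=
  sSup (lipVals g S)

end LipDefs

section PsiDefs

variable {H : Type*} [NormedAddCommGroup H] [InnerProductSpace ℝ H]

/-- `v_{a,b} = ½(D_af + D_bf) + (κ/2)(b - a)`. -/
def vab (Df : H → H) (κ : ℝ) (a b : H) : H :=
  (1 / 2 : ℝ) • (Df a + Df b) + (κ / 2) • (b - a)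

/-- `α_{a,b}`. -/
def alphaab (f : H → ℝ) (Df : H → H) (κ : ℝ) (a b : H) : ℝ :=
  2 * κ * (f a - f b) + κ * ⟪Df a + Df b, b - a⟫
    - 1 / 2 * ‖Df a - Df b‖ ^ 2 + κ ^ 2 / 2 * ‖a - b‖ ^ 2

/-- `β_{a,b}(x)`. -/
def betaab (Df : H → H) (κ : ℝ) (a b x : H) : ℝ :=
  ‖(1 / 2 : ℝ) • (Df a - Df b) + (κ / 2) • ((2 : ℝ) • x - a - b)‖ ^ 2

/-- `r_{a,b}(x) = √(α_{a,b} + β_{a,b}(x))`. -/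
def rab (f : H → ℝ) (Df : H → H) (κ : ℝ) (a b x : H) : ℝ :=
  Real.sqrt (alphaab f Df κ a b + betaab Df κ a b x)

/-- `Λ_x = {v : ‖v - v_{a,b}‖ ≤ r_{a,b}(x) for all a, b ∈ Ω}`. -/
def Lambda (f : H → ℝ) (Df : H → H) (κ : ℝ) (Ω : Set H) (x : H) : Set H :=
  {v | ∀ a ∈ Ω, ∀ b ∈ Ω, ‖v - vab Df κ a b‖ ≤ rab f Df κ a b x}

/-- `Ψ⁺(F, x, a, v)`. -/
def PsiPlus (f : H → ℝ) (Df : H → H) (κ : ℝ) (x a v : H) : ℝ :=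
  f a + 1 / 2 * ⟪Df a + v, x - a⟫ + κ / 4 * ‖a - x‖ ^ 2 - 1 / (4 * κ) * ‖Df a - v‖ ^ 2

/-- `Ψ⁻(F, x, a, v)`. -/
def PsiMinus (f : H → ℝ) (Df : H → H) (κ : ℝ) (x a v : H) : ℝ :=
  f a + 1 / 2 * ⟪Df a + v, x - a⟫ - κ / 4 * ‖a - x‖ ^ 2 + 1 / (4 * κ) * ‖Df a - v‖ ^ 2

/-- `inf_{a ∈ Ω} Ψ⁺(F, x, a, v)`. -/
def infPsiPlus (f : H → ℝ) (Df : H → H) (κ : ℝ) (Ω : Set H) (x v : H) : ℝ :=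
  sInf {t | ∃ a ∈ Ω, t = PsiPlus f Df κ x a v}

/-- `sup_{a ∈ Ω} Ψ⁻(F, x, a, v)`. -/
def supPsiMinus (f : H → ℝ) (Df : H → H) (κ : ℝ) (Ω : Set H) (x v : H) : ℝ :=
  sSup {t | ∃ a ∈ Ω, t = PsiMinus f Df κ x a v}

/-- `u⁺(x) = sup_{v ∈ Λ_x} inf_{a ∈ Ω} Ψ⁺(F, x, a, v)`. -/
def uPlus (f : H → ℝ) (Df : H → H) (κ : ℝ) (Ω : Set H) (x : H) : ℝ :=
  sSup {t | ∃ v ∈ Lambda f Df κ Ω x, t = infPsiPlus f Df κ Ω x v}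

/-- `u⁻(x) = inf_{v ∈ Λ_x} sup_{a ∈ Ω} Ψ⁻(F, x, a, v)`. -/
def uMinus (f : H → ℝ) (Df : H → H) (κ : ℝ) (Ω : Set H) (x : H) : ℝ :=
  sInf {t | ∃ v ∈ Lambda f Df κ Ω x, t = supPsiMinus f Df κ Ω x v}

/-- `(g, Dg)` is a minimal Lipschitz extension of the 1-field `(f, Df)` of domain `Ω` to `H`. -/
def IsMLE (f : H → ℝ) (Df : H → H) (Ω : Set H) (g : H → ℝ) (Dg : H → H) : Prop :=
  (∀ x ∈ Ω, g x = f x ∧ Dg x = Df x) ∧ gammaOn g Dg Set.univ = gammaOn f Df Ω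

/-- Over extremal MLE. -/
def IsOverExtremal (f : H → ℝ) (Df : H → H) (Ω : Set H) (g₁ : H → ℝ) (Dg₁ : H → H) : Prop :=
  IsMLE f Df Ω g₁ Dg₁ ∧ ∀ g Dg, IsMLE f Df Ω g Dg → ∀ x, g x ≤ g₁ x

/-- Under extremal MLE. -/
def IsUnderExtremal (f : H → ℝ) (Df : H → H) (Ω : Set H) (g₂ : H → ℝ) (Dg₂ : H → H) : Prop :=
  IsMLE f Df Ω g₂ Dg₂ ∧ ∀ g Dg, IsMLE f Df Ω g Dg → ∀ x, g₂ x ≤ g x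

/-- Absolutely minimal Lipschitz extension. -/
def IsAMLE (f : H → ℝ) (Df : H → H) (Ω : Set H) (g : H → ℝ) (Dg : H → H) : Prop :=
  IsMLE f Df Ω g Dg ∧
    ∀ V : Set H, V.Nonempty → IsOpen V → Bornology.IsBounded V → closure V ⊆ Ωᶜ →
      gammaOn g Dg V = gammaOn g Dg (frontier V)

end PsiDefs

namespace Stmt0Aux

set_option linter.unusedSectionVars false

/-! ### Scalar helper lemmas -/

lemma scalar_id {δ W d S K : ℝ} (hd : 0 < d)
    (hSq : S^2 = 4*δ^2 + W^2*d^2) (hK : K*d^2 = 2*|δ| + S) :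
    K^2*d^2 - 4*K*|δ| = W^2 := by
  have habs2 : |δ|^2 = δ^2 := sq_abs δ
  have h2 : d^2*(K^2*d^2 - 4*K*|δ| - W^2) = 0 := by
    linear_combination (K*d^2 - 2*|δ| + S) * hK + hSq - 4 * habs2
  have hd2 : d^2 ≠ 0 := by positivity
  rcases mul_eq_zero.mp h2 with h | h
  · exact absurd h hd2
  · linarith

lemma scalar_up {δ W d S K t v : ℝ} (hd : 0 < d) (hW : 0 ≤ W) (hS0 : 0 ≤ S)
    (hSq : S^2 = 4*δ^2 + W^2*d^2) (hK : K*d^2 = 2*|δ| + S) (ht : 0 ≤ t)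
    (hv : |v| ≤ |δ| + W*t) :
    2*|v| ≤ K*(2*t^2 + d^2/2) := by
  have hid := scalar_id hd hSq hK
  have hd2 : (0:ℝ) < d^2 := by positivity
  have h0 : 0 ≤ K * d^2 := by nlinarith [abs_nonneg δ]
  have hKnn : 0 ≤ K := by nlinarith [h0, hd2]
  rcases eq_or_lt_of_le hKnn with hK0 | hKpos
  · have h1 : 2*|δ| + S = 0 := by nlinarith
    have hδ0 : |δ| = 0 := by nlinarith [abs_nonneg δ]
    have hS0' : S = 0 := by nlinarith [abs_nonneg δ]
    have hW0 : W = 0 := by nlinarith [sq_abs δ, abs_nonneg δ]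
    have : |v| ≤ 0 := by nlinarith
    nlinarith [abs_nonneg v]
  · have key : 2*K*(K*(2*t^2+d^2/2)) - 2*K*(2*|δ|+2*W*t) = (2*K*t - W)^2 := by
      linear_combination hid
    nlinarith [key, sq_nonneg (2*K*t - W), hv, abs_nonneg v]

lemma scalar_attain {δ W d S K : ℝ} (hd : 0 < d)
    (hSq : S^2 = 4*δ^2 + W^2*d^2) (hK : K*d^2 = 2*|δ| + S) (hKpos : 0 < K) :
    2*(|δ| + W^2/(2*K)) = K * (W^2/(2*K^2) + d^2/2) := by
  have hid := scalar_id hd hSq hK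
  have hK0 : K ≠ 0 := ne_of_gt hKpos
  field_simp
  linear_combination (-1 : ℝ) * hid

lemma scalar_le {δ W d S K κ : ℝ} (hd : 0 < d)
    (hSq : S^2 = 4*δ^2 + W^2*d^2) (hK : K*d^2 = 2*|δ| + S)
    (hS2δ : 2*|δ| ≤ S) (hκ : K ≤ κ) (hκ0 : 0 ≤ κ) :
    4*κ*|δ| + W^2 ≤ κ^2*d^2 := by
  have hid := scalar_id hd hSq hK
  have key : κ^2*d^2 - 4*κ*|δ| - W^2
      = (κ - K)*(κ*d^2 + K*d^2 - 4*|δ|) + (K^2*d^2 - 4*K*|δ| - W^2) := by ring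
  have h1 : 0 ≤ κ - K := by linarith
  have h2 : 0 ≤ K*d^2 - 4*|δ| := by linarith
  have h3 : 0 ≤ κ*d^2 := by positivity
  nlinarith [mul_nonneg h1 (by linarith : (0:ℝ) ≤ κ*d^2 + K*d^2 - 4*|δ|)]

lemma scalar_core {κ s P W N e δ δ' d I1 I2 I4 ip : ℝ}
    (hκ : 0 < κ) (hs : 0 < s) (hP : 0 < P)
    (h4κs : 4*κ*s ≤ 1)
    (e3 : δ' = δ + 1/2*I1 + 1/2*(-(s*(κ*I4 - W^2))) + e)
    (e4 : P^2 = κ^2*d^2 - 2*κ*I4 + W^2)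
    (hip : ip = κ*I1 - I2)
    (heq : 4*κ*δ + W^2 = κ^2*d^2)
    (h1 : 4*κ*|e| + N^2 ≤ κ^2*(s*P)^2)
    (h2 : 4*κ*|δ'| + (W^2 - 2*I2 + N^2) ≤ κ^2*(d^2 + 2*s*(-(κ*d^2) + I4) + s^2*P^2)) :
    N^2 + 2*(κ*s)*ip + (κ*s)^2*P^2 ≤ 0 := by
  have hκs : 0 < κ*s := mul_pos hκ hs
  have hδ'a : 4*κ*δ' ≤ 4*κ*|δ'| := by
    have h := le_abs_self δ'
    have := mul_le_mul_of_nonneg_left h (by positivity : (0:ℝ) ≤ 4*κ)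
    linarith
  have h2' : 4*κ*(δ + 1/2*I1 + 1/2*(-(s*(κ*I4 - W^2))) + e) + (W^2 - 2*I2 + N^2)
      ≤ κ^2*(d^2 + 2*s*(-(κ*d^2) + I4) + s^2*P^2) := by
    rw [← e3]; linarith
  have e4s : 2*κ*s*P^2 = 2*κ*s*(κ^2*d^2 - 2*κ*I4 + W^2) := by
    linear_combination (2*κ*s)*e4
  have hip2 : 2*ip = 2*κ*I1 - 2*I2 := by linarith
  have hA : 2*ip + 2*κ*s*P^2 + N^2 + 4*κ*e ≤ κ^2*s^2*P^2 := by linarith [h2', e4s, hip2, heq]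
  have habse : -(4*κ*|e|) ≤ 4*κ*e := by
    have h := neg_abs_le e
    have := mul_le_mul_of_nonneg_left h (by positivity : (0:ℝ) ≤ 4*κ)
    linarith
  have hB : ip ≤ κ^2*s^2*P^2 - κ*s*P^2 - N^2 := by nlinarith [hA, h1, habse]
  have hC1 : 2*(κ*s)*ip ≤ 2*(κ*s)*(κ^2*s^2*P^2 - κ*s*P^2 - N^2) := by
    have h2κs : 0 ≤ 2*(κ*s) := by positivity
    exact mul_le_mul_of_nonneg_left hB h2κs
  have hN2 : N^2 ≤ κ^2*s^2*P^2 := by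
    have h4e : 0 ≤ 4*κ*|e| := by positivity
    nlinarith [h1]
  have hfac : 0 ≤ (κ^2*s^2*P^2 - N^2) * (1 - 2*(κ*s)) := by
    apply mul_nonneg (by linarith) (by linarith)
  linarith [hC1, hfac]

/-! ### Vector geometry lemmas -/

variable {H : Type*} [NormedAddCommGroup H] [InnerProductSpace ℝ H]

/-- signed second-order difference: `δ_{x,y}` -/
def dP (f : H → ℝ) (Df : H → H) (x y : H) : ℝ :=
  f x - f y + 1/2 * ⟪Df x + Df y, y - x⟫

def SS (f : H → ℝ) (Df : H → H) (x y : H) : ℝ :=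
  Real.sqrt (4*(dP f Df x y)^2 + ‖Df x - Df y‖^2 * ‖x-y‖^2)

def KK (f : H → ℝ) (Df : H → H) (x y : H) : ℝ :=
  (2*|dP f Df x y| + SS f Df x y) / ‖x-y‖^2

lemma sign_exists (δ : ℝ) : ∃ σ : ℝ, σ * δ = |δ| ∧ σ^2 = 1 := by
  rcases le_or_gt 0 δ with h | h
  · exact ⟨1, by rw [abs_of_nonneg h]; ring, by norm_num⟩
  · exact ⟨-1, by rw [abs_of_neg h]; ring, by norm_num⟩

lemma eval_sub (f : H → ℝ) (Df : H → H) (x y z : H) :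
    fieldEval f Df x z - fieldEval f Df y z
      = dP f Df x y + ⟪Df x - Df y, z - (1/2:ℝ)•(x+y)⟫ := by
  simp only [fieldEval, dP, inner_sub_left, inner_sub_right, inner_add_left, inner_add_right,
    real_inner_smul_right]
  ring

lemma norm_sum_eq (x y z : H) :
    ‖x - z‖^2 + ‖y - z‖^2 = 2*‖z - (1/2:ℝ)•(x+y)‖^2 + ‖x - y‖^2/2 := by
  simp only [← real_inner_self_eq_norm_sq, inner_sub_left, inner_sub_right,
    inner_add_left, inner_add_right, real_inner_smul_left, real_inner_smul_right,
    real_inner_comm z x, real_inner_comm z y, real_inner_comm y x]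
  ring

variable (f : H → ℝ) (Df : H → H) (x y : H)

lemma dist_pos' (hxy : x ≠ y) : (0:ℝ) < ‖x - y‖ := by
  simpa [norm_pos_iff, sub_eq_zero] using hxy

lemma SS_nonneg : 0 ≤ SS f Df x y := Real.sqrt_nonneg _

lemma SS_sq : (SS f Df x y)^2 = 4*(dP f Df x y)^2 + ‖Df x - Df y‖^2 * ‖x-y‖^2 := by
  rw [SS, Real.sq_sqrt]; positivity

lemma SS_ge_abs : 2*|dP f Df x y| ≤ SS f Df x y := by
  rw [show (2*|dP f Df x y|) = Real.sqrt ((2*|dP f Df x y|)^2) by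
    rw [Real.sqrt_sq (by positivity)]]
  apply Real.sqrt_le_sqrt
  rw [mul_pow]
  nlinarith [sq_nonneg (‖Df x - Df y‖ * ‖x-y‖), sq_abs (dP f Df x y)]

lemma SS_ge_W : ‖Df x - Df y‖ * ‖x - y‖ ≤ SS f Df x y := by
  rw [show ‖Df x - Df y‖ * ‖x-y‖ = Real.sqrt ((‖Df x - Df y‖ * ‖x-y‖)^2) by
    rw [Real.sqrt_sq (by positivity)]]
  apply Real.sqrt_le_sqrt
  rw [mul_pow]
  nlinarith [sq_nonneg (dP f Df x y)]

lemma KK_eq (hxy : x ≠ y) : KK f Df x y * ‖x-y‖^2 = 2*|dP f Df x y| + SS f Df x y := by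
  have hd := dist_pos' x y hxy
  rw [KK]; field_simp

lemma KK_nonneg : 0 ≤ KK f Df x y := by
  have h1 := SS_nonneg f Df x y
  have h2 := abs_nonneg (dP f Df x y)
  unfold KK; positivity

lemma num_le (hxy : x ≠ y) (z : H) :
    2 * |fieldEval f Df x z - fieldEval f Df y z|
      ≤ KK f Df x y * (‖x - z‖ ^ 2 + ‖y - z‖ ^ 2) := by
  have hd := dist_pos' x y hxy
  rw [eval_sub, norm_sum_eq]
  have habs : |dP f Df x y + ⟪Df x - Df y, z - (1/2:ℝ)•(x+y)⟫|
      ≤ |dP f Df x y| + ‖Df x - Df y‖ * ‖z - (1/2:ℝ)•(x+y)‖ := by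
    refine le_trans (abs_add_le _ _) ?_
    gcongr
    exact abs_real_inner_le_norm _ _
  exact scalar_up hd (norm_nonneg _) (SS_nonneg f Df x y) (SS_sq f Df x y)
    (KK_eq f Df x y hxy) (norm_nonneg _) habs

lemma denom_pos (hxy : x ≠ y) (z : H) : 0 < ‖x - z‖ ^ 2 + ‖y - z‖ ^ 2 := by
  have hd := dist_pos' x y hxy
  rw [norm_sum_eq]
  positivity

lemma ratio_le (hxy : x ≠ y) (z : H) :
    2 * |fieldEval f Df x z - fieldEval f Df y z| / (‖x - z‖ ^ 2 + ‖y - z‖ ^ 2)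
      ≤ KK f Df x y := by
  rw [div_le_iff₀ (denom_pos x y hxy z)]
  exact num_le f Df x y hxy z

lemma gammaPair_eq (hxy : x ≠ y) : gammaPair f Df x y = KK f Df x y := by
  have hd := dist_pos' x y hxy
  have hbdd : BddAbove (Set.range fun z =>
      2 * |fieldEval f Df x z - fieldEval f Df y z| / (‖x - z‖ ^ 2 + ‖y - z‖ ^ 2)) := by
    refine ⟨KK f Df x y, ?_⟩
    rintro _ ⟨z, rfl⟩
    exact ratio_le f Df x y hxy z
  apply le_antisymm
  · exact ciSup_le (ratio_le f Df x y hxy)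
  · rcases eq_or_lt_of_le (KK_nonneg f Df x y) with hK0 | hKpos
    · rw [← hK0]
      refine le_trans ?_ (le_ciSup hbdd x)
      positivity
    · obtain ⟨σ, hσδ, hσsq⟩ := sign_exists (dP f Df x y)
      have hKne : KK f Df x y ≠ 0 := ne_of_gt hKpos
      have hσabs : σ * |dP f Df x y| = dP f Df x y := by
        linear_combination (-σ)*hσδ + (dP f Df x y)*hσsq
      set z : H := (1/2:ℝ)•(x+y) + (σ/(2*KK f Df x y)) • (Df x - Df y) with hz
      refine le_trans (le_of_eq ?_) (le_ciSup hbdd z)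
      have hzm : z - (1/2:ℝ)•(x+y) = (σ/(2*KK f Df x y)) • (Df x - Df y) := by
        rw [hz]; abel
      have hnum : fieldEval f Df x z - fieldEval f Df y z
          = dP f Df x y + σ/(2*KK f Df x y) * ‖Df x - Df y‖^2 := by
        rw [eval_sub, hzm, real_inner_smul_right, real_inner_self_eq_norm_sq]
      have hden : ‖x - z‖^2 + ‖y - z‖^2
          = ‖Df x - Df y‖^2/(2*(KK f Df x y)^2) + ‖x-y‖^2/2 := by
        rw [norm_sum_eq, hzm, norm_smul, Real.norm_eq_abs, mul_pow, sq_abs, div_pow, hσsq]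
        field_simp
      have hWKnn : 0 ≤ ‖Df x - Df y‖^2/(2*KK f Df x y) :=
        div_nonneg (sq_nonneg _) (by linarith)
      have habs2 : |dP f Df x y + σ/(2*KK f Df x y) * ‖Df x - Df y‖^2|
          = |dP f Df x y| + ‖Df x - Df y‖^2/(2*KK f Df x y) := by
        have hrw : dP f Df x y + σ/(2*KK f Df x y) * ‖Df x - Df y‖^2
            = σ * (|dP f Df x y| + ‖Df x - Df y‖^2/(2*KK f Df x y)) := by
          have h2 : σ * (σ/(2*KK f Df x y) * ‖Df x - Df y‖^2)
              = ‖Df x - Df y‖^2/(2*KK f Df x y) := by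
            field_simp
            linear_combination (‖Df x - Df y‖^2) * hσsq
          calc dP f Df x y + σ/(2*KK f Df x y) * ‖Df x - Df y‖^2
              = σ * |dP f Df x y| + σ * (σ * (σ/(2*KK f Df x y) * ‖Df x - Df y‖^2)) := by
                rw [hσabs]
                have : σ * (σ * (σ/(2*KK f Df x y) * ‖Df x - Df y‖^2))
                    = σ^2 * (σ/(2*KK f Df x y) * ‖Df x - Df y‖^2) := by ring
                rw [this, hσsq, one_mul]
            _ = σ * (|dP f Df x y| + ‖Df x - Df y‖^2/(2*KK f Df x y)) := by rw [h2]; ring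
        rw [hrw, abs_mul]
        have habsσ : |σ| = 1 := by
          have := sq_abs σ
          nlinarith [abs_nonneg σ]
        rw [habsσ, one_mul, abs_of_nonneg (by positivity)]
      rw [hnum, hden, habs2, eq_comm, div_eq_iff (by positivity)]
      exact scalar_attain hd (SS_sq f Df x y) (KK_eq f Df x y hxy) hKpos

lemma KK_ge_B (hxy : x ≠ y) : ‖Df x - Df y‖ ≤ KK f Df x y * ‖x - y‖ := by
  have hd := dist_pos' x y hxy
  have h1 := KK_eq f Df x y hxy
  have h2 := SS_ge_W f Df x y
  have h3 := abs_nonneg (dP f Df x y)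
  nlinarith

lemma dP_symm : dP f Df y x = -(dP f Df x y) := by
  simp only [dP, inner_add_left, inner_sub_right]
  ring

/-! ### The core perturbation lemma -/

lemma core {H : Type*} [NormedAddCommGroup H] [InnerProductSpace ℝ H]
    (f : H → ℝ) (Df : H → H) {Ω : Set H} (hΩop : IsOpen Ω) {κ : ℝ} (hκ : 0 < κ)
    {a b : H} (ha : a ∈ Ω) (hb : b ∈ Ω) (hab : a ≠ b) (hδ : 0 ≤ dP f Df a b)
    (heq : 4*κ*(dP f Df a b) + ‖Df a - Df b‖^2 = κ^2*‖a-b‖^2)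
    (hpair : ∀ x ∈ Ω, ∀ y ∈ Ω, x ≠ y →
      4*κ*|dP f Df x y| + ‖Df x - Df y‖^2 ≤ κ^2*‖x-y‖^2) :
    ∃ x ∈ Ω, ∃ y ∈ Ω, x ≠ y ∧ ‖Df x - Df y‖ = κ * ‖x - y‖ := by
  by_cases hp : κ•(b-a) - (Df a - Df b) = 0
  · refine ⟨a, ha, b, hb, hab, ?_⟩
    have hw : Df a - Df b = κ•(b-a) := by
      rw [sub_eq_zero] at hp; exact hp.symm
    rw [hw, norm_smul, Real.norm_eq_abs, abs_of_pos hκ, norm_sub_rev]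
  · set p : H := κ•(b-a) - (Df a - Df b) with hpdef
    have hP : 0 < ‖p‖ := by
      rw [norm_pos_iff]; exact hp
    obtain ⟨ε, hε, hball⟩ := Metric.isOpen_iff.mp hΩop b hb
    have hd : 0 < ‖a - b‖ := dist_pos' a b hab
    set s : ℝ := min (min (ε/(2*‖p‖)) (‖a-b‖/(2*‖p‖))) (1/(4*κ)) with hsdef
    have hs0 : 0 < s := by
      apply lt_min (lt_min (by positivity) (by positivity)) (by positivity)
    have hsP_eps : s * ‖p‖ < ε := by
      have h1 : s ≤ ε/(2*‖p‖) := le_trans (min_le_left _ _) (min_le_left _ _)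
      have h2 : s * ‖p‖ ≤ ε/(2*‖p‖) * ‖p‖ := mul_le_mul_of_nonneg_right h1 (le_of_lt hP)
      have h3 : ε/(2*‖p‖) * ‖p‖ = ε/2 := by field_simp
      linarith
    have hsP_d : s * ‖p‖ ≤ ‖a-b‖/2 := by
      have h1 : s ≤ ‖a-b‖/(2*‖p‖) := le_trans (min_le_left _ _) (min_le_right _ _)
      calc s * ‖p‖ ≤ ‖a-b‖/(2*‖p‖) * ‖p‖ := mul_le_mul_of_nonneg_right h1 (le_of_lt hP)
        _ = ‖a-b‖/2 := by field_simp
    have h4κs : 4*κ*s ≤ 1 := by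
      have h1 : s ≤ 1/(4*κ) := min_le_right _ _
      rw [le_div_iff₀ (by positivity : (0:ℝ) < 4*κ)] at h1
      linarith
    set y : H := b - s • p with hy
    have hby : b - y = s • p := by rw [hy]; abel
    have hbynorm : ‖b - y‖ = s * ‖p‖ := by
      rw [hby, norm_smul, Real.norm_eq_abs, abs_of_pos hs0]
    have hyΩ : y ∈ Ω := by
      apply hball
      rw [Metric.mem_ball, dist_eq_norm, ← norm_sub_rev, hbynorm]
      exact hsP_eps
    have hyb : y ≠ b := by
      intro h
      rw [h, sub_self, norm_zero] at hbynorm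
      nlinarith
    have hay : a ≠ y := by
      intro h
      have h2 : ‖a - b‖ ≤ ‖a - y‖ + ‖y - b‖ := by
        simpa [dist_eq_norm] using dist_triangle a y b
      have h3 : ‖a - y‖ = 0 := by rw [h, sub_self, norm_zero]
      have h4 : ‖y - b‖ = s * ‖p‖ := by rw [norm_sub_rev, hbynorm]
      rw [h3, h4] at h2
      nlinarith
    -- the two inequalities
    have h1 := hpair b hb y hyΩ (Ne.symm hyb)
    have h2 := hpair a ha y hyΩ hay
    -- rewrite h1
    have hDfby : ‖Df b - Df y‖ = ‖Df y - Df b‖ := norm_sub_rev _ _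
    rw [hDfby, hbynorm] at h1
    -- vector expansions for h2
    have ve1 : ‖Df a - Df y‖^2 = ‖Df a - Df b‖^2
        - 2*⟪Df a - Df b, Df y - Df b⟫ + ‖Df y - Df b‖^2 := by
      rw [show Df a - Df y = (Df a - Df b) - (Df y - Df b) by abel, @norm_sub_sq_real]
    have hinab : ⟪a - b, p⟫ = -(κ*‖a-b‖^2) + ⟪Df a - Df b, b - a⟫ := by
      rw [hpdef]
      simp only [inner_sub_right, inner_sub_left, inner_add_left, inner_add_right,
        real_inner_smul_right, ← real_inner_self_eq_norm_sq,
        real_inner_comm b a, real_inner_comm (Df a) a, real_inner_comm (Df a) b,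
        real_inner_comm (Df b) a, real_inner_comm (Df b) b]
      ring
    have ve2 : ‖a - y‖^2 = ‖a-b‖^2 + 2*s*(-(κ*‖a-b‖^2) + ⟪Df a - Df b, b - a⟫) + s^2*‖p‖^2 := by
      rw [show a - y = (a-b) + s•p by rw [hy]; abel, @norm_add_sq_real,
        real_inner_smul_right, hinab, norm_smul, Real.norm_eq_abs, abs_of_pos hs0, mul_pow]
      ring
    have hinwp : ⟪Df a - Df b, p⟫ = κ*⟪Df a - Df b, b - a⟫ - ‖Df a - Df b‖^2 := by
      rw [hpdef]
      simp only [inner_sub_right, real_inner_smul_right, ← real_inner_self_eq_norm_sq]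
    have ve3 : dP f Df a y = dP f Df a b + 1/2*⟪Df y - Df b, b - a⟫
        + 1/2*(-(s*(κ*⟪Df a - Df b, b - a⟫ - ‖Df a - Df b‖^2))) + dP f Df b y := by
      have hsplit : dP f Df a y = dP f Df a b + 1/2*⟪Df y - Df b, b - a⟫
          + 1/2*⟪Df a - Df b, y - b⟫ + dP f Df b y := by
        simp only [dP, inner_add_left, inner_sub_left, inner_sub_right, inner_add_right]
        ring
      have hζ : ⟪Df a - Df b, y - b⟫ = -(s*(κ*⟪Df a - Df b, b - a⟫ - ‖Df a - Df b‖^2)) := by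
        rw [show y - b = -(s•p) by rw [hy]; abel, inner_neg_right, real_inner_smul_right, hinwp]
      rw [hsplit, hζ]
    have ve4 : ‖p‖^2 = κ^2*‖a-b‖^2 - 2*κ*⟪Df a - Df b, b - a⟫ + ‖Df a - Df b‖^2 := by
      rw [hpdef, @norm_sub_sq_real, norm_smul, Real.norm_eq_abs, abs_of_pos hκ, mul_pow,
        real_inner_smul_left, real_inner_comm (b-a) (Df a - Df b), norm_sub_rev b a, norm_sub_rev a b]
      ring
    have hip : ⟪Df y - Df b, p⟫ = κ*⟪Df y - Df b, b - a⟫ - ⟪Df a - Df b, Df y - Df b⟫ := by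
      rw [hpdef]
      simp only [inner_sub_right, real_inner_smul_right, real_inner_comm (Df y - Df b) (Df a - Df b)]
    -- rewrite h2 using expansions
    rw [ve1, ve2] at h2
    -- scalar core
    have habs : |dP f Df a b| = dP f Df a b := abs_of_nonneg hδ
    have heq' : 4*κ*(dP f Df a b) + ‖Df a - Df b‖^2 = κ^2*‖a-b‖^2 := heq
    have hcore := scalar_core (κ := κ) (s := s) (P := ‖p‖) (W := ‖Df a - Df b‖)
      (N := ‖Df y - Df b‖) (e := dP f Df b y) (δ' := dP f Df a y) (δ := dP f Df a b)
      (d := ‖a-b‖) (I1 := ⟪Df y - Df b, b - a⟫) (I2 := ⟪Df a - Df b, Df y - Df b⟫)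
      (I4 := ⟪Df a - Df b, b - a⟫) (ip := ⟪Df y - Df b, p⟫)
      hκ hs0 hP h4κs ve3 ve4 hip heq' h1 (by linarith [h2])
    -- conclude Df y - Df b = -(κ*s)•p
    have hexp : ‖(Df y - Df b) + (κ*s)•p‖^2
        = ‖Df y - Df b‖^2 + 2*(κ*s)*⟪Df y - Df b, p⟫ + (κ*s)^2*‖p‖^2 := by
      rw [@norm_add_sq_real, real_inner_smul_right, norm_smul, Real.norm_eq_abs,
        abs_of_pos (by positivity : (0:ℝ) < κ*s), mul_pow]
      ring
    have hzero : ‖(Df y - Df b) + (κ*s)•p‖^2 = 0 := by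
      have h0 : ‖(Df y - Df b) + (κ*s)•p‖^2 ≤ 0 := by rw [hexp]; exact hcore
      have h1' : 0 ≤ ‖(Df y - Df b) + (κ*s)•p‖^2 := sq_nonneg _
      linarith
    have hveq : Df y - Df b = -((κ*s)•p) := by
      have hz0 : (Df y - Df b) + (κ*s)•p = 0 := by
        have hn : ‖(Df y - Df b) + (κ*s)•p‖ = 0 :=
          pow_eq_zero_iff (n := 2) (by norm_num) |>.mp hzero
        exact norm_eq_zero.mp hn
      exact eq_neg_of_add_eq_zero_left hz0
    refine ⟨b, hb, y, hyΩ, Ne.symm hyb, ?_⟩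
    rw [hDfby, hveq, norm_neg, norm_smul, Real.norm_eq_abs,
      abs_of_pos (by positivity : (0:ℝ) < κ*s), hbynorm]
    ring

end Stmt0Aux

/-- If `Ω` is a nonempty open subset of `ℝⁿ`, `F = (f, Df)` is a Taylorian
1-field on `Ω`, and the supremum `Γ¹(F;Ω)` is attained at some pair `a ≠ b` in `Ω`, then
`Γ¹(F;Ω) = Lip(Df;Ω)`. -/
theorem stmt_0 {n : ℕ} (hn : 1 ≤ n) (Ω : Set (EuclideanSpace ℝ (Fin n)))
    (hΩne : Ω.Nonempty) (hΩop : IsOpen Ω)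
    (f : EuclideanSpace ℝ (Fin n) → ℝ)
    (Df : EuclideanSpace ℝ (Fin n) → EuclideanSpace ℝ (Fin n))
    (hTay : BddAbove (gammaVals f Df Ω))
    (a b : EuclideanSpace ℝ (Fin n)) (ha : a ∈ Ω) (hb : b ∈ Ω) (hab : a ≠ b)
    (hattain : gammaPair f Df a b = gammaOn f Df Ω) :
    gammaOn f Df Ω = lipOn Df Ω := by
  classical
  set κ := gammaOn f Df Ω with hκdef
  have hKab : gammaPair f Df a b = Stmt0Aux.KK f Df a b := Stmt0Aux.gammaPair_eq f Df a b hab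
  have hκK : κ = Stmt0Aux.KK f Df a b := by rw [← hattain, hKab]
  have hκ0 : 0 ≤ κ := by rw [hκK]; exact Stmt0Aux.KK_nonneg f Df a b
  have hKle : ∀ x, x ∈ Ω → ∀ y, y ∈ Ω → x ≠ y → Stmt0Aux.KK f Df x y ≤ κ := by
    intro x hx y hy hxy
    rw [← Stmt0Aux.gammaPair_eq f Df x y hxy]
    exact le_csSup hTay ⟨x, hx, y, hy, hxy, rfl⟩
  have hBle : ∀ x, x ∈ Ω → ∀ y, y ∈ Ω → x ≠ y → ‖Df x - Df y‖ ≤ κ * ‖x - y‖ := by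
    intro x hx y hy hxy
    calc ‖Df x - Df y‖ ≤ Stmt0Aux.KK f Df x y * ‖x - y‖ := Stmt0Aux.KK_ge_B f Df x y hxy
      _ ≤ κ * ‖x - y‖ := mul_le_mul_of_nonneg_right (hKle x hx y hy hxy) (norm_nonneg _)
  have hlipBdd : ∀ t ∈ lipVals Df Ω, t ≤ κ := by
    rintro t ⟨x, hx, y, hy, hxy, rfl⟩
    rw [div_le_iff₀ (Stmt0Aux.dist_pos' x y hxy)]
    exact hBle x hx y hy hxy
  have hub : lipOn Df Ω ≤ κ := Real.sSup_le hlipBdd hκ0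
  have hBddAbove : BddAbove (lipVals Df Ω) := ⟨κ, hlipBdd⟩
  refine le_antisymm ?_ hub
  rcases eq_or_lt_of_le hκ0 with hκz | hκpos
  · rw [← hκz]
    have hmem : (‖Df a - Df b‖ / ‖a - b‖) ∈ lipVals Df Ω := ⟨a, ha, b, hb, hab, rfl⟩
    exact le_trans (by positivity) (le_csSup hBddAbove hmem)
  · have hd := Stmt0Aux.dist_pos' a b hab
    have hKEq : κ * ‖a-b‖^2 = 2*|Stmt0Aux.dP f Df a b| + Stmt0Aux.SS f Df a b := by
      rw [hκK]; exact Stmt0Aux.KK_eq f Df a b hab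
    have heqab : 4*κ*|Stmt0Aux.dP f Df a b| + ‖Df a - Df b‖^2 = κ^2*‖a-b‖^2 := by
      have := Stmt0Aux.scalar_id hd (Stmt0Aux.SS_sq f Df a b) hKEq
      linarith
    have hpair : ∀ x ∈ Ω, ∀ y ∈ Ω, x ≠ y →
        4*κ*|Stmt0Aux.dP f Df x y| + ‖Df x - Df y‖^2 ≤ κ^2*‖x-y‖^2 := by
      intro x hx y hy hxy
      exact Stmt0Aux.scalar_le (Stmt0Aux.dist_pos' x y hxy) (Stmt0Aux.SS_sq f Df x y)
        (Stmt0Aux.KK_eq f Df x y hxy) (Stmt0Aux.SS_ge_abs f Df x y)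
        (hKle x hx y hy hxy) hκ0
    obtain ⟨x, hx, y, hy, hxy, hW⟩ :
        ∃ x ∈ Ω, ∃ y ∈ Ω, x ≠ y ∧ ‖Df x - Df y‖ = κ * ‖x - y‖ := by
      rcases le_or_gt 0 (Stmt0Aux.dP f Df a b) with hor | hor
      · refine Stmt0Aux.core f Df hΩop hκpos ha hb hab hor ?_ hpair
        rwa [abs_of_nonneg hor] at heqab
      · have hba : b ≠ a := Ne.symm hab
        have hδba : 0 ≤ Stmt0Aux.dP f Df b a := by
          rw [Stmt0Aux.dP_symm f Df a b]
          linarith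
        refine Stmt0Aux.core f Df hΩop hκpos hb ha hba hδba ?_ hpair
        rw [Stmt0Aux.dP_symm f Df a b, norm_sub_rev (Df b) (Df a), norm_sub_rev b a]
        rw [abs_of_neg hor] at heqab
        linarith
    have hmem : (‖Df x - Df y‖ / ‖x - y‖) ∈ lipVals Df Ω := ⟨x, hx, y, hy, hxy, rfl⟩
    refine le_trans (le_of_eq ?_) (le_csSup hBddAbove hmem)
    rw [hW]
    have hdxy := Stmt0Aux.dist_pos' x y hxy
    field_simp
end
end

section
/- Let Ω be a nonempty open subset of ℝⁿ and let F be a Taylorian 1-field on Ω. Suppose there exists a nonempty set Ω′ with compact closure contained in Ω such that Γ¹(F;Ω′) = Γ¹(F;Ω). Then Γ¹(F;Ω) = Lip(Df;Ω). -/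
noncomputable section

open scoped RealInnerProductSpace

section AuxProof
variable {H : Type*} [NormedAddCommGroup H] [InnerProductSpace ℝ H]

def Cxy (f : H → ℝ) (Df : H → H) (x y : H) : ℝ :=
  f x - f y + (1/2) * ⟪Df x + Df y, y - x⟫

lemma N_decomp (f : H → ℝ) (Df : H → H) (x y a : H) :
    fieldEval f Df x a - fieldEval f Df y a
      = Cxy f Df x y + ⟪Df x - Df y, a - (1/2:ℝ) • (x+y)⟫ := by
  simp only [fieldEval, Cxy, inner_sub_left, inner_sub_right, inner_add_left,
    inner_add_right, real_inner_smul_right]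
  ring

lemma D_decomp (x y a : H) :
    ‖x - a‖ ^ 2 + ‖y - a‖ ^ 2
      = ‖x - y‖ ^ 2 / 2 + 2 * ‖a - (1/2:ℝ) • (x+y)‖ ^ 2 := by
  simp only [← real_inner_self_eq_norm_sq, inner_sub_left, inner_sub_right,
    inner_add_left, inner_add_right, real_inner_smul_left, real_inner_smul_right,
    real_inner_comm a x, real_inner_comm a y, real_inner_comm y x]
  ring

section Q
variable (f : H → ℝ) (Df : H → H)

/-- the quotient appearing in `gammaPair` -/
def qF (x y a : H) : ℝ :=
  2 * |fieldEval f Df x a - fieldEval f Df y a| / (‖x - a‖ ^ 2 + ‖y - a‖ ^ 2)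

lemma denom_pos {x y : H} (hxy : x ≠ y) (a : H) :
    0 < ‖x - a‖ ^ 2 + ‖y - a‖ ^ 2 := by
  rw [D_decomp]
  have h1 : 0 < ‖x - y‖ ^ 2 := by
    have : (0:ℝ) < ‖x - y‖ := by rw [norm_pos_iff]; exact sub_ne_zero_of_ne hxy
    positivity
  positivity

lemma qF_nonneg {x y : H} (hxy : x ≠ y) (a : H) : 0 ≤ qF f Df x y a := by
  have h := denom_pos (H := H) hxy a
  unfold qF
  positivity

lemma qF_le {x y : H} (hxy : x ≠ y) (a : H) :
    qF f Df x y a ≤ 4 * |Cxy f Df x y| / ‖x - y‖ ^ 2 + ‖Df x - Df y‖ / ‖x - y‖ := by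
  have hd : (0:ℝ) < ‖x - y‖ := by
    rw [norm_pos_iff]; exact sub_ne_zero_of_ne hxy
  have hD := denom_pos (H := H) hxy a
  rw [qF, div_le_iff₀ hD, N_decomp, D_decomp]
  have hin : |⟪Df x - Df y, a - (1/2:ℝ) • (x+y)⟫| ≤ ‖Df x - Df y‖ * ‖a - (1/2:ℝ) • (x+y)‖ :=
    abs_real_inner_le_norm _ _
  have habs : |Cxy f Df x y + ⟪Df x - Df y, a - (1/2:ℝ) • (x+y)⟫|
      ≤ |Cxy f Df x y| + ‖Df x - Df y‖ * ‖a - (1/2:ℝ) • (x+y)‖ :=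
    (abs_add_le _ _).trans (by linarith [hin])
  set c := |Cxy f Df x y|
  set b := ‖Df x - Df y‖
  set h := ‖a - (1/2:ℝ) • (x+y)‖
  set d := ‖x - y‖
  have hc : 0 ≤ c := abs_nonneg _
  have hb : 0 ≤ b := norm_nonneg _
  have hh : 0 ≤ h := norm_nonneg _
  have key : 2 * (c + b * h) ≤ (4 * c / d ^ 2 + b / d) * (d ^ 2 / 2 + 2 * h ^ 2) := by
    have h1 : (4 * c / d ^ 2) * (d ^ 2 / 2 + 2 * h ^ 2) ≥ 2 * c := by
      rw [ge_iff_le, div_mul_eq_mul_div, le_div_iff₀ (by positivity)]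
      nlinarith
    have h2 : (b / d) * (d ^ 2 / 2 + 2 * h ^ 2) ≥ 2 * b * h := by
      rw [ge_iff_le, div_mul_eq_mul_div, le_div_iff₀ hd]
      nlinarith [sq_nonneg (d - 2*h)]
    nlinarith
  calc 2 * |Cxy f Df x y + ⟪Df x - Df y, a - (1/2:ℝ) • (x+y)⟫|
      ≤ 2 * (c + b * h) := by linarith
    _ ≤ _ := key

lemma qF_bddAbove {x y : H} (hxy : x ≠ y) :
    BddAbove (Set.range (qF f Df x y)) :=
  ⟨_, by rintro t ⟨a, rfl⟩; exact qF_le f Df hxy a⟩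

end Q

section Sup
variable (f : H → ℝ) (Df : H → H) {Ω : Set H}

lemma gammaPair_eq_iSup (x y : H) : gammaPair f Df x y = ⨆ a, qF f Df x y a := rfl

lemma qF_le_gammaPair {x y : H} (hxy : x ≠ y) (a : H) :
    qF f Df x y a ≤ gammaPair f Df x y := by
  rw [gammaPair_eq_iSup]
  exact le_ciSup (qF_bddAbove f Df hxy) a

lemma gammaPair_nonneg {x y : H} (hxy : x ≠ y) : 0 ≤ gammaPair f Df x y :=
  le_trans (qF_nonneg f Df hxy x) (qF_le_gammaPair f Df hxy x)

lemma gammaPair_le_gammaOn (hTay : BddAbove (gammaVals f Df Ω)) {x y : H}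
    (hx : x ∈ Ω) (hy : y ∈ Ω) (hxy : x ≠ y) :
    gammaPair f Df x y ≤ gammaOn f Df Ω :=
  le_csSup hTay ⟨x, hx, y, hy, hxy, rfl⟩

lemma gammaOn_nonneg (S : Set H) : 0 ≤ gammaOn f Df S := by
  apply Real.sSup_nonneg
  rintro t ⟨x, hx, y, hy, hxy, rfl⟩
  exact gammaPair_nonneg f Df hxy

lemma qF_le_gammaOn (hTay : BddAbove (gammaVals f Df Ω)) {x y : H}
    (hx : x ∈ Ω) (hy : y ∈ Ω) (hxy : x ≠ y) (a : H) :
    qF f Df x y a ≤ gammaOn f Df Ω :=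
  (qF_le_gammaPair f Df hxy a).trans (gammaPair_le_gammaOn f Df hTay hx hy hxy)

/-- two-sided Taylor bound on `Ω`. -/
lemma taylor_bound (hTay : BddAbove (gammaVals f Df Ω)) {x u : H}
    (hx : x ∈ Ω) (hu : u ∈ Ω) :
    |f x + ⟪Df x, u - x⟫ - f u| ≤ gammaOn f Df Ω / 2 * ‖x - u‖ ^ 2 := by
  rcases eq_or_ne x u with rfl | hxu
  · simp
  · have h := qF_le_gammaOn f Df hTay hx hu hxu u
    have hD : ‖x - u‖ ^ 2 + ‖u - u‖ ^ 2 = ‖x - u‖ ^ 2 := by simp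
    have hd : (0:ℝ) < ‖x - u‖ ^ 2 := by
      have : (0:ℝ) < ‖x - u‖ := by rw [norm_pos_iff]; exact sub_ne_zero_of_ne hxu
      positivity
    rw [qF, hD, div_le_iff₀ hd] at h
    have hN : fieldEval f Df x u - fieldEval f Df u u = f x + ⟪Df x, u - x⟫ - f u := by
      simp [fieldEval]
    rw [hN] at h
    linarith [h]

/-- pointwise Lipschitz bound for `Df` from `gammaOn`. -/
lemma lip_pair (hTay : BddAbove (gammaVals f Df Ω)) {x y : H}
    (hx : x ∈ Ω) (hy : y ∈ Ω) :
    ‖Df x - Df y‖ ≤ gammaOn f Df Ω * ‖x - y‖ := by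
  rcases eq_or_ne x y with rfl | hxy
  · simp
  set K := gammaOn f Df Ω
  set w := Df x - Df y with hw
  set d := ‖x - y‖ with hdd
  have hd : (0:ℝ) < d := by rw [hdd, norm_pos_iff]; exact sub_ne_zero_of_ne hxy
  rcases eq_or_ne w 0 with hw0 | hw0
  · rw [hw0]
    simp only [norm_zero]
    exact mul_nonneg (gammaOn_nonneg f Df Ω) (le_of_lt hd)
  have hb : (0:ℝ) < ‖w‖ := norm_pos_iff.mpr hw0
  set C := Cxy f Df x y with hC
  set c₀ : ℝ := (if 0 ≤ C then 1 else -1) * (d / (2 * ‖w‖)) with hc₀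
  set a₀ := (1/2:ℝ) • (x + y) + c₀ • w with ha₀
  have hsub : a₀ - (1/2:ℝ) • (x + y) = c₀ • w := add_sub_cancel_left _ _
  have hNa : fieldEval f Df x a₀ - fieldEval f Df y a₀ = C + c₀ * ‖w‖ ^ 2 := by
    rw [N_decomp, hsub, real_inner_smul_right, real_inner_self_eq_norm_sq]
  have hDa : ‖x - a₀‖ ^ 2 + ‖y - a₀‖ ^ 2 = d ^ 2 := by
    rw [D_decomp, hsub, norm_smul]
    have habsc : ‖c₀‖ = d / (2 * ‖w‖) := by
      rw [Real.norm_eq_abs, hc₀, abs_mul]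
      have h2 : |d / (2 * ‖w‖)| = d / (2 * ‖w‖) := abs_of_nonneg (by positivity)
      split_ifs <;> simp [h2]
    rw [habsc, mul_pow, div_pow]
    field_simp
    ring
  have habs : d * ‖w‖ / 2 ≤ |C + c₀ * ‖w‖ ^ 2| := by
    have hc : c₀ * ‖w‖ ^ 2 = (if 0 ≤ C then 1 else -1) * (d * ‖w‖ / 2) := by
      rw [hc₀]
      field_simp
    have hdw : (0:ℝ) ≤ d * ‖w‖ / 2 := by positivity
    split_ifs at hc with hCs
    · rw [hc]
      calc d * ‖w‖ / 2 ≤ C + 1 * (d * ‖w‖ / 2) := by linarith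
        _ ≤ |C + 1 * (d * ‖w‖ / 2)| := le_abs_self _
    · rw [hc]
      push_neg at hCs
      calc d * ‖w‖ / 2 ≤ -(C + (-1) * (d * ‖w‖ / 2)) := by linarith
        _ ≤ |C + (-1) * (d * ‖w‖ / 2)| := neg_le_abs _
  have hq : ‖w‖ / d ≤ qF f Df x y a₀ := by
    rw [qF, hNa, hDa, div_le_div_iff₀ hd (by positivity)]
    nlinarith [habs, hd, hb]
  have h2 := hq.trans (qF_le_gammaOn f Df hTay hx hy hxy a₀)
  rw [div_le_iff₀ hd] at h2
  exact h2

end Sup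

section Deriv
variable (f : H → ℝ) (Df : H → H) {Ω : Set H}

lemma hasFDerivAt_of_taylor (hTay : BddAbove (gammaVals f Df Ω)) (hΩop : IsOpen Ω)
    {x : H} (hx : x ∈ Ω) :
    HasFDerivAt f ((innerSL ℝ) (Df x)) x := by
  rw [hasFDerivAt_iff_isLittleO_nhds_zero]
  rw [Asymptotics.isLittleO_iff]
  intro c hc
  set K := gammaOn f Df Ω with hK
  have hK0 : 0 ≤ K := gammaOn_nonneg f Df Ω
  have hball : ∀ᶠ h : H in nhds 0, x + h ∈ Ω := by
    have : Filter.Tendsto (fun h : H => x + h) (nhds 0) (nhds x) := by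
      have := (Filter.tendsto_id (x := nhds (0:H))).const_add x
      simpa using this
    exact this.eventually (hΩop.mem_nhds hx)
  have hsmall : ∀ᶠ h : H in nhds 0, ‖h‖ ≤ c / (K/2 + 1) := by
    apply Filter.eventually_iff_exists_mem.mpr
    refine ⟨Metric.closedBall 0 (c / (K/2 + 1)), Metric.closedBall_mem_nhds 0 (div_pos hc (by linarith)), ?_⟩
    intro h hh
    rw [Metric.mem_closedBall, dist_zero_right] at hh
    exact hh
  filter_upwards [hball, hsmall] with h hmem hle
  have ht := taylor_bound f Df hTay hx hmem
  have h1 : x - (x + h) = -h := by abel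
  have h2 : x + h - x = h := by abel
  rw [h2, h1, norm_neg] at ht
  have : |f x + ⟪Df x, h⟫ - f (x + h)| ≤ K / 2 * ‖h‖ ^ 2 := ht
  have hc2 : K / 2 * ‖h‖ ^ 2 ≤ c * ‖h‖ := by
    have h3 : K / 2 * ‖h‖ ≤ c := by
      rcases le_or_gt ‖h‖ 0 with h4 | h4
      · have : ‖h‖ = 0 := le_antisymm h4 (norm_nonneg _)
        rw [this, mul_zero]; exact hc.le
      · calc K / 2 * ‖h‖ ≤ (K/2 + 1) * (c / (K/2+1)) := by
              apply mul_le_mul (by linarith) hle (le_of_lt h4) (by linarith)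
          _ = c := by field_simp
    calc K / 2 * ‖h‖ ^ 2 = (K / 2 * ‖h‖) * ‖h‖ := by ring
      _ ≤ c * ‖h‖ := mul_le_mul_of_nonneg_right h3 (norm_nonneg _)
  calc ‖f (x + h) - f x - (innerSL ℝ) (Df x) h‖
      = |f x + ⟪Df x, h⟫ - f (x + h)| := by
        rw [Real.norm_eq_abs, ← abs_neg]; congr 1; simp; ring
    _ ≤ c * ‖h‖ := le_trans this hc2

/-- descent lemma with sharp constant on a segment. -/
lemma descent {L : ℝ} (hL : 0 ≤ L)
    (hdiff : ∀ u ∈ Ω, HasFDerivAt f ((innerSL ℝ) (Df u)) u)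
    (hLip : ∀ u ∈ Ω, ∀ v ∈ Ω, ‖Df u - Df v‖ ≤ L * ‖u - v‖)
    {x z : H} (hseg : segment ℝ x z ⊆ Ω) :
    f z ≤ f x + ⟪Df x, z - x⟫ + L / 2 * ‖z - x‖ ^ 2 := by
  have hxΩ : x ∈ Ω := hseg (left_mem_segment ℝ x z)
  set g : ℝ → ℝ := fun t => f (x + t • (z - x)) - t * ⟪Df x, z - x⟫ - L / 2 * t ^ 2 * ‖z - x‖ ^ 2
    with hg
  have hmem : ∀ t ∈ Set.Icc (0:ℝ) 1, x + t • (z - x) ∈ Ω := by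
    intro t ht
    apply hseg
    rw [segment_eq_image']
    exact ⟨t, ht, rfl⟩
  have hderiv : ∀ t ∈ Set.Icc (0:ℝ) 1, HasDerivAt g
      (⟪Df (x + t • (z - x)), z - x⟫ - ⟪Df x, z - x⟫ - L * t * ‖z - x‖ ^ 2) t := by
    intro t ht
    have h1 : HasDerivAt (fun t : ℝ => x + t • (z - x)) (z - x) t := by
      simpa using ((hasDerivAt_id t).smul_const (z - x)).const_add x
    have h2 : HasDerivAt (fun t : ℝ => f (x + t • (z - x))) ⟪Df (x + t • (z - x)), z - x⟫ t := by
      have h3 := (hdiff _ (hmem t ht)).comp_hasDerivAt t h1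
      exact h3
    have h4 : HasDerivAt (fun t : ℝ => t * ⟪Df x, z - x⟫) ⟪Df x, z - x⟫ t := by
      simpa using (hasDerivAt_id t).mul_const ⟪Df x, z - x⟫
    have h5 : HasDerivAt (fun t : ℝ => L / 2 * t ^ 2 * ‖z - x‖ ^ 2) (L * t * ‖z - x‖ ^ 2) t := by
      have := (hasDerivAt_pow 2 t).const_mul (L / 2)
      have h6 := this.mul_const (‖z - x‖ ^ 2)
      rw [show L * t * ‖z - x‖ ^ 2 = L / 2 * ((2:ℕ) * t ^ (2 - 1)) * ‖z - x‖ ^ 2 by push_cast; ring]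
      exact h6
    exact (h2.sub h4).sub h5
  have hanti : AntitoneOn g (Set.Icc 0 1) := by
    apply antitoneOn_of_deriv_nonpos (convex_Icc 0 1)
    · intro t ht
      exact (hderiv t ht).continuousAt.continuousWithinAt
    · intro t ht
      rw [interior_Icc] at ht
      exact (hderiv t (Set.mem_Icc_of_Ioo ht)).differentiableAt.differentiableWithinAt
    · intro t ht
      rw [interior_Icc] at ht
      rw [(hderiv t (Set.mem_Icc_of_Ioo ht)).deriv]
      have hub := hLip _ (hmem t (Set.mem_Icc_of_Ioo ht)) _ hxΩ
      have h7 : x + t • (z - x) - x = t • (z - x) := by abel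
      rw [h7, norm_smul, Real.norm_eq_abs, abs_of_nonneg (le_of_lt ht.1)] at hub
      have h8 : ⟪Df (x + t • (z - x)) - Df x, z - x⟫ ≤ L * (t * ‖z - x‖) * ‖z - x‖ :=
        le_trans (real_inner_le_norm _ _) (mul_le_mul_of_nonneg_right hub (norm_nonneg _))
      rw [inner_sub_left] at h8
      nlinarith [h8]
  have h01 := hanti (Set.mem_Icc.mpr ⟨le_refl 0, zero_le_one⟩)
    (Set.mem_Icc.mpr ⟨zero_le_one, le_refl 1⟩) zero_le_one
  rw [hg] at h01
  simp only [zero_smul, add_zero, one_smul, zero_mul, zero_pow, mul_zero, sub_zero,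
    one_mul, one_pow, mul_one] at h01
  have hxz : x + (z - x) = z := by abel
  rw [hxz] at h01
  linarith [h01]

end Deriv

section Sharp
variable (f : H → ℝ) (Df : H → H) {Ω : Set H}

lemma Cxy_swap (x y : H) : Cxy f Df y x = - Cxy f Df x y := by
  simp only [Cxy, inner_add_left, inner_sub_right]
  ring

lemma neg_hdiff (hdiff : ∀ u ∈ Ω, HasFDerivAt f ((innerSL ℝ) (Df u)) u) :
    ∀ u ∈ Ω, HasFDerivAt (fun w => -f w) ((innerSL ℝ) ((fun w => -Df w) u)) u := by
  intro u hu
  have h1 : (innerSL ℝ) (-(Df u)) = -((innerSL ℝ) (Df u)) := map_neg _ _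
  simp only [h1]
  exact (hdiff u hu).neg

lemma sharp {L : ℝ} (hL : 0 < L)
    (hdiff : ∀ u ∈ Ω, HasFDerivAt f ((innerSL ℝ) (Df u)) u)
    (hLip : ∀ u ∈ Ω, ∀ v ∈ Ω, ‖Df u - Df v‖ ≤ L * ‖u - v‖)
    {x y : H}
    (hseg1 : segment ℝ x ((1/2:ℝ) • (x + y) - (1/(2*L)) • (Df x - Df y)) ⊆ Ω)
    (hseg2 : segment ℝ y ((1/2:ℝ) • (x + y) - (1/(2*L)) • (Df x - Df y)) ⊆ Ω) :
    ‖Df x - Df y‖ ^ 2 ≤ 4 * L * Cxy f Df x y + L ^ 2 * ‖x - y‖ ^ 2 := by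
  set z := (1/2:ℝ) • (x + y) - (1/(2*L)) • (Df x - Df y) with hz
  have h1 : f z ≤ f x + ⟪Df x, z - x⟫ + L / 2 * ‖z - x‖ ^ 2 :=
    descent f Df hL.le hdiff hLip hseg1
  have hLip' : ∀ u ∈ Ω, ∀ v ∈ Ω, ‖(fun w => -Df w) u - (fun w => -Df w) v‖ ≤ L * ‖u - v‖ := by
    intro u hu v hv
    simp only
    rw [show -Df u - -Df v = Df v - Df u by abel, norm_sub_rev]
    exact hLip u hu v hv
  have h2' := descent (fun w => -f w) (fun w => -Df w) hL.le (neg_hdiff f Df hdiff) hLip' hseg2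
  simp only [inner_neg_left] at h2'
  have h2 : f y + ⟪Df y, z - y⟫ - L / 2 * ‖z - y‖ ^ 2 ≤ f z := by linarith
  have hcomb : 0 ≤ f x - f y + (⟪Df x, z - x⟫ - ⟪Df y, z - y⟫)
      + L / 2 * (‖z - x‖ ^ 2 + ‖z - y‖ ^ 2) := by linarith
  have key : ⟪Df x, z - x⟫ - ⟪Df y, z - y⟫ + L / 2 * (‖z - x‖ ^ 2 + ‖z - y‖ ^ 2)
      = (1/2) * ⟪Df x + Df y, y - x⟫ + L * ‖x - y‖ ^ 2 / 4
        - ‖Df x - Df y‖ ^ 2 / (4 * L) := by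
    rw [hz]
    simp only [← real_inner_self_eq_norm_sq, inner_sub_left, inner_sub_right,
      inner_add_left, inner_add_right, real_inner_smul_left, real_inner_smul_right,
      real_inner_comm x (Df x), real_inner_comm x (Df y), real_inner_comm y (Df x),
      real_inner_comm y (Df y), real_inner_comm y x, real_inner_comm (Df y) (Df x)]
    field_simp
    ring
  have hfin : 0 ≤ Cxy f Df x y + L * ‖x - y‖ ^ 2 / 4 - ‖Df x - Df y‖ ^ 2 / (4 * L) := by
    rw [Cxy]
    linarith [hcomb, key]
  have h4 : ‖Df x - Df y‖ ^ 2 / (4 * L) ≤ Cxy f Df x y + L * ‖x - y‖ ^ 2 / 4 := by linarith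
  rw [div_le_iff₀ (by positivity)] at h4
  nlinarith [h4]

lemma caseA (hTay : BddAbove (gammaVals f Df Ω)) {L : ℝ} (hL : 0 < L)
    (hdiff : ∀ u ∈ Ω, HasFDerivAt f ((innerSL ℝ) (Df u)) u)
    (hLip : ∀ u ∈ Ω, ∀ v ∈ Ω, ‖Df u - Df v‖ ≤ L * ‖u - v‖)
    {x y : H} (hx : x ∈ Ω) (hy : y ∈ Ω) (hxy : x ≠ y)
    (hball : Metric.closedBall x (2 * ‖x - y‖) ⊆ Ω) :
    gammaPair f Df x y ≤ L := by
  set d := ‖x - y‖ with hdd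
  have hd : (0:ℝ) < d := by rw [hdd, norm_pos_iff]; exact sub_ne_zero_of_ne hxy
  set w := Df x - Df y with hw
  set b := ‖w‖ with hbb
  have hbLd : b ≤ L * d := hLip x hx y hy
  -- membership facts
  have hxball : x ∈ Metric.closedBall x (2 * d) := by
    simp [Metric.mem_closedBall]; positivity
  have hyball : y ∈ Metric.closedBall x (2 * d) := by
    rw [Metric.mem_closedBall, dist_eq_norm, ← norm_sub_rev]
    calc ‖x - y‖ = d := rfl
      _ ≤ 2 * d := by linarith
  have hzball : ∀ v : H, ‖v‖ = b → (1/2:ℝ) • (x + y) - (1/(2*L)) • v ∈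
      Metric.closedBall x (2 * d) := by
    intro v hv
    rw [Metric.mem_closedBall, dist_eq_norm]
    have hid : (1/2:ℝ) • (x + y) - (1/(2*L)) • v - x
        = (1/2:ℝ) • (y - x) - (1/(2*L)) • v := by
      module
    rw [hid]
    calc ‖(1/2:ℝ) • (y - x) - (1/(2*L)) • v‖
        ≤ ‖(1/2:ℝ) • (y - x)‖ + ‖(1/(2*L)) • v‖ := norm_sub_le _ _
      _ = (1/2) * d + (1/(2*L)) * b := by
          rw [norm_smul, norm_smul, Real.norm_eq_abs, Real.norm_eq_abs,
            abs_of_nonneg (by norm_num : (0:ℝ) ≤ 1/2),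
            abs_of_nonneg (by positivity : (0:ℝ) ≤ 1/(2*L)), hv, ← norm_sub_rev x y]
      _ ≤ (1/2) * d + (1/(2*L)) * (L * d) := by
          have h5 : (0:ℝ) ≤ 1/(2*L) := by positivity
          nlinarith [hbLd, h5]
      _ = d := by field_simp; ring
      _ ≤ 2 * d := by linarith
  have hconv := (convex_closedBall x (2*d))
  have h1 : ‖w‖ ^ 2 ≤ 4 * L * Cxy f Df x y + L ^ 2 * d ^ 2 := by
    apply sharp f Df hL hdiff hLip
    · exact (hconv.segment_subset hxball (hzball w rfl)).trans hball
    · exact (hconv.segment_subset hyball (hzball w rfl)).trans hball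
  have h2 : ‖w‖ ^ 2 ≤ - (4 * L * Cxy f Df x y) + L ^ 2 * d ^ 2 := by
    have hz2 := hzball (Df y - Df x) (by rw [hbb, hw]; exact norm_sub_rev _ _)
    rw [show (1/2:ℝ) • (x + y) = (1/2:ℝ) • (y + x) by rw [add_comm]] at hz2
    have h3 := sharp f Df (x := y) (y := x) hL hdiff hLip
      ((hconv.segment_subset hyball hz2).trans hball)
      ((hconv.segment_subset hxball hz2).trans hball)
    rw [Cxy_swap, ← norm_sub_rev (Df x), ← norm_sub_rev x] at h3
    calc ‖w‖ ^ 2 ≤ 4 * L * -Cxy f Df x y + L ^ 2 * d ^ 2 := h3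
      _ = - (4 * L * Cxy f Df x y) + L ^ 2 * d ^ 2 := by ring
  have hC4 : 4 * L * |Cxy f Df x y| + b ^ 2 ≤ L ^ 2 * d ^ 2 := by
    rcases abs_cases (Cxy f Df x y) with ⟨he, _⟩ | ⟨he, _⟩ <;> rw [he] <;> linarith
  rw [gammaPair_eq_iSup]
  apply Real.iSup_le _ hL.le
  intro a
  rw [qF, div_le_iff₀ (denom_pos hxy a), N_decomp, D_decomp]
  have habs : |Cxy f Df x y + ⟪w, a - (1/2:ℝ) • (x+y)⟫|
      ≤ |Cxy f Df x y| + b * ‖a - (1/2:ℝ) • (x+y)‖ :=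
    (abs_add_le _ _).trans (by linarith [abs_real_inner_le_norm w (a - (1/2:ℝ) • (x+y))])
  set hn := ‖a - (1/2:ℝ) • (x+y)‖
  have hhn : 0 ≤ hn := norm_nonneg _
  nlinarith [habs, hC4, sq_nonneg (2*L*hn - b), hL, abs_nonneg (Cxy f Df x y)]

end Sharp

section CaseB

lemma arithB {K η t r Y I E : ℝ} (hη : 0 ≤ η) (ht : 0 < t) (ht2 : 2*t ≤ r)
    (hY0 : 0 ≤ Y) (hE0 : 0 ≤ E)
    (hstep1 : 2*((r-t)/r)*I ≤ 2*K*t^2 - 2*K*t*r + η*(r^2+Y))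
    (hCS : -I ≤ E*r) :
    K - η*(r^2+Y)/(t*r) ≤ E/t := by
  have hr : 0 < r := by linarith
  have h1 : 2*(r-t)*I ≤ (2*K*t^2 - 2*K*t*r + η*(r^2+Y))*r := by
    have h0 := mul_le_mul_of_nonneg_right hstep1 hr.le
    calc 2*(r-t)*I = (2*((r-t)/r)*I)*r := by field_simp
      _ ≤ _ := h0
  have hE2 : 2*K*t*(r-t) - η*(r^2+Y) ≤ 2*(r-t)*E := by
    have h10 : (2*K*t*r - 2*K*t^2 - η*(r^2+Y))*r ≤ 2*(r-t)*(-I) := by nlinarith [h1]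
    have h11 : 2*(r-t)*(-I) ≤ 2*(r-t)*(E*r) := mul_le_mul_of_nonneg_left hCS (by linarith)
    nlinarith [h10, h11, hr]
  have goal' : K*t*r - η*(r^2+Y) ≤ E*r := by
    rcases le_or_gt E (K*t) with hc | hc
    · nlinarith [hE2, ht2, hc]
    · nlinarith [hE2, mul_nonneg hη hY0, mul_nonneg hη (sq_nonneg r), hr, hc, ht]
  have h12 : (K - η*(r^2+Y)/(t*r))*t ≤ E := by
    have h13 : (K - η*(r^2+Y)/(t*r))*t = (K*t*r - η*(r^2+Y))/r := by
      field_simp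
    rw [h13, div_le_iff₀ hr]
    exact goal'
  linarith [(le_div_iff₀ ht).mpr h12]

variable (f : H → ℝ) (Df : H → H) {Ω : Set H}

lemma caseB (hTay : BddAbove (gammaVals f Df Ω)) {K : ℝ} (hK : gammaOn f Df Ω = K)
    {x y a : H} (hx : x ∈ Ω) (hy : y ∈ Ω) (hxy : x ≠ y)
    {η t : ℝ} (hη : 0 ≤ η) (ht : 0 < t) (ht2 : 2 * t ≤ ‖a - x‖)
    (hN : (K - η) * (‖x - a‖ ^ 2 + ‖y - a‖ ^ 2)
        ≤ 2 * (fieldEval f Df x a - fieldEval f Df y a))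
    (hu : x + (t / ‖a - x‖) • (a - x) ∈ Ω)
    (huy : x + (t / ‖a - x‖) • (a - x) ≠ y) :
    ∃ p ∈ Ω, ∃ q ∈ Ω, p ≠ q ∧
      K - η * (‖x - a‖ ^ 2 + ‖y - a‖ ^ 2) / (t * ‖a - x‖)
        ≤ ‖Df p - Df q‖ / ‖p - q‖ := by
  have hρ : 0 < ‖a - x‖ := lt_of_lt_of_le (by linarith) ht2
  set u := x + (t / ‖a - x‖) • (a - x) with hudef
  have hxa : ‖x - a‖ = ‖a - x‖ := norm_sub_rev x a
  have hux : u - x = (t / ‖a - x‖) • (a - x) := by rw [hudef]; abel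
  have hnux : ‖u - x‖ = t := by
    rw [hux, norm_smul, Real.norm_eq_abs, abs_of_nonneg (div_nonneg ht.le hρ.le)]
    field_simp
  have hxu : ‖x - u‖ = t := by rw [norm_sub_rev]; exact hnux
  have hxune : x ≠ u := by
    intro h
    rw [← h] at hxu
    simp only [sub_self, norm_zero] at hxu
    linarith
  have hau : a - u = ((‖a - x‖ - t) / ‖a - x‖) • (a - x) := by
    rw [hudef]
    match_scalars <;> (field_simp; try ring)
  have hnua : ‖u - a‖ = ‖a - x‖ - t := by
    rw [norm_sub_rev, hau, norm_smul, Real.norm_eq_abs,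
      abs_of_nonneg (div_nonneg (by linarith) hρ.le)]
    field_simp
  have hKq := qF_le_gammaOn f Df hTay hu hy huy a
  rw [hK, qF, div_le_iff₀ (denom_pos huy a)] at hKq
  rw [hnua] at hKq
  have hKq2 : 2 * (fieldEval f Df u a - fieldEval f Df y a)
      ≤ K * ((‖a - x‖ - t) ^ 2 + ‖y - a‖ ^ 2) := by
    have h5 := le_abs_self (fieldEval f Df u a - fieldEval f Df y a)
    nlinarith [hKq, h5]
  have htay := taylor_bound f Df hTay hx hu
  rw [hK, hxu, abs_le] at htay
  have E1 : fieldEval f Df u a - fieldEval f Df x a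
      = (f u - f x - ⟪Df x, u - x⟫)
        + ((‖a - x‖ - t)/‖a - x‖) * ⟪Df u - Df x, a - x⟫ := by
    rw [show ((‖a - x‖ - t)/‖a - x‖) * ⟪Df u - Df x, a - x⟫ = ⟪Df u - Df x, a - u⟫ by
      rw [hau, real_inner_smul_right]]
    simp only [fieldEval, inner_sub_left, inner_sub_right]
    ring
  rw [hxa] at hN
  have step1 : 2 * ((‖a - x‖ - t)/‖a - x‖) * ⟪Df u - Df x, a - x⟫
      ≤ 2*K*t^2 - 2*K*t*‖a - x‖ + η*(‖a - x‖^2 + ‖y - a‖^2) := by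
    nlinarith [hKq2, hN, htay.1, htay.2, E1]
  have hCS : -⟪Df u - Df x, a - x⟫ ≤ ‖Df x - Df u‖ * ‖a - x‖ := by
    have h8 : ⟪Df x - Df u, a - x⟫ ≤ ‖Df x - Df u‖ * ‖a - x‖ := real_inner_le_norm _ _
    rw [show Df x - Df u = -(Df u - Df x) by abel, inner_neg_left] at h8
    simpa using h8
  have harith := arithB hη ht ht2 (sq_nonneg ‖y - a‖) (norm_nonneg (Df x - Df u)) step1 hCS
  refine ⟨x, hx, u, hu, hxune, ?_⟩
  rw [hxu, hxa]
  exact harith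

end CaseB

section Neg
variable (f : H → ℝ) (Df : H → H)

lemma fieldEval_neg (x a : H) :
    fieldEval (fun w => -f w) (fun w => -Df w) x a = -(fieldEval f Df x a) := by
  simp [fieldEval, inner_neg_left]
  ring

lemma gammaPair_neg (x y : H) :
    gammaPair (fun w => -f w) (fun w => -Df w) x y = gammaPair f Df x y := by
  unfold gammaPair
  congr 1
  funext a
  rw [fieldEval_neg, fieldEval_neg]
  rw [show -fieldEval f Df x a - -fieldEval f Df y a
    = -(fieldEval f Df x a - fieldEval f Df y a) by ring, abs_neg]

lemma gammaVals_neg (S : Set H) :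
    gammaVals (fun w => -f w) (fun w => -Df w) S = gammaVals f Df S := by
  unfold gammaVals
  ext s
  constructor
  · rintro ⟨x, hx, y, hy, hxy, rfl⟩
    exact ⟨x, hx, y, hy, hxy, (gammaPair_neg f Df x y)⟩
  · rintro ⟨x, hx, y, hy, hxy, rfl⟩
    exact ⟨x, hx, y, hy, hxy, (gammaPair_neg f Df x y).symm⟩

lemma gammaOn_neg (S : Set H) :
    gammaOn (fun w => -f w) (fun w => -Df w) S = gammaOn f Df S := by
  unfold gammaOn
  rw [gammaVals_neg]

lemma norm_shift {X a : H} {t : ℝ} (ht : 0 ≤ t) (hρ : 0 < ‖a - X‖) :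
    ‖(X + (t / ‖a - X‖) • (a - X)) - X‖ = t := by
  rw [show (X + (t / ‖a - X‖) • (a - X)) - X = (t / ‖a - X‖) • (a - X) by abel,
    norm_smul, Real.norm_eq_abs, abs_of_nonneg (div_nonneg ht hρ.le)]
  field_simp

end Neg

section LipFacts
variable (f : H → ℝ) (Df : H → H) {Ω : Set H}

lemma lipVals_bddAbove (hTay : BddAbove (gammaVals f Df Ω)) :
    BddAbove (lipVals Df Ω) := by
  refine ⟨gammaOn f Df Ω, ?_⟩
  rintro s ⟨x, hx, y, hy, hxy, rfl⟩
  have hd : (0:ℝ) < ‖x - y‖ := by rw [norm_pos_iff]; exact sub_ne_zero_of_ne hxy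
  rw [div_le_iff₀ hd]
  exact lip_pair f Df hTay hx hy

lemma lipOn_nonneg (S : Set H) : 0 ≤ lipOn Df S := by
  apply Real.sSup_nonneg
  rintro s ⟨x, hx, y, hy, hxy, rfl⟩
  positivity

lemma lipOn_le_gammaOn (hTay : BddAbove (gammaVals f Df Ω)) :
    lipOn Df Ω ≤ gammaOn f Df Ω := by
  apply Real.sSup_le _ (gammaOn_nonneg f Df Ω)
  rintro s ⟨x, hx, y, hy, hxy, rfl⟩
  have hd : (0:ℝ) < ‖x - y‖ := by rw [norm_pos_iff]; exact sub_ne_zero_of_ne hxy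
  rw [div_le_iff₀ hd]
  exact lip_pair f Df hTay hx hy

lemma lipQuot_le_lipOn (hTay : BddAbove (gammaVals f Df Ω)) {x y : H}
    (hx : x ∈ Ω) (hy : y ∈ Ω) (hxy : x ≠ y) :
    ‖Df x - Df y‖ / ‖x - y‖ ≤ lipOn Df Ω :=
  le_csSup (lipVals_bddAbove f Df hTay) ⟨x, hx, y, hy, hxy, rfl⟩

lemma lip_bound (hTay : BddAbove (gammaVals f Df Ω)) {x y : H}
    (hx : x ∈ Ω) (hy : y ∈ Ω) :
    ‖Df x - Df y‖ ≤ lipOn Df Ω * ‖x - y‖ := by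
  rcases eq_or_ne x y with rfl | hxy
  · simp
  have hd : (0:ℝ) < ‖x - y‖ := by rw [norm_pos_iff]; exact sub_ne_zero_of_ne hxy
  rw [← div_le_iff₀ hd]
  exact lipQuot_le_lipOn f Df hTay hx hy hxy

end LipFacts

lemma Dbound {K δ Mf MD cx cy Nv : ℝ} (hKpos : 0 < K) (hδK : δ ≤ K/4)
    (hqlow : (K - 2*δ)*(cx^2+cy^2) < 2*|Nv|)
    (hNb : |Nv| ≤ 2*Mf + MD*cx + MD*cy)
    (hD : 0 < cx^2+cy^2) :
    cx^2+cy^2 ≤ (16*Mf*K + 32*MD^2)/K^2 := by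
  rw [le_div_iff₀ (by positivity : (0:ℝ) < K^2)]
  have hex : 0 ≤ (K/2 - 2*δ) * (cx^2 + cy^2) := mul_nonneg (by linarith) hD.le
  have hmain : K * (cx^2 + cy^2) ≤ 8*Mf + 4*MD*cx + 4*MD*cy := by
    nlinarith [hqlow, hNb, hex]
  nlinarith [hmain, sq_nonneg (K*cx - 4*MD), sq_nonneg (K*cy - 4*MD),
    hKpos, mul_pos hKpos hKpos]

lemma convBound {ε δ M₁ t r₀ ρ Dv : ℝ} (hε : 0 < ε) (hδpos : 0 < δ)
    (hδM : δ ≤ ε*t*r₀/(8*M₁+8)) (hM₁0 : 0 ≤ M₁) (ht : 0 < t) (hr₀ : 0 < r₀)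
    (hρ : r₀/2 ≤ ρ) (hDv : 0 ≤ Dv) (hDM : Dv ≤ M₁) :
    2*δ*Dv/(t*ρ) ≤ ε := by
  have hρ0 : 0 < ρ := lt_of_lt_of_le (by linarith) hρ
  calc 2*δ*Dv/(t*ρ) ≤ 2*δ*M₁/(t*(r₀/2)) := by
        apply div_le_div₀ (by positivity) (by nlinarith) (by positivity) (by nlinarith)
    _ ≤ ε := by
        rw [div_le_iff₀ (by positivity)]
        have h8 : (0:ℝ) < 8*M₁+8 := by linarith
        have h9 := hδM
        rw [le_div_iff₀ h8] at h9
        nlinarith [hM₁0, h9, ht, hr₀, hε]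

section Main
variable {Ω : Set H}

theorem main_general (Ω : Set H) (hΩop : IsOpen Ω)
    (f : H → ℝ) (Df : H → H)
    (hTay : BddAbove (gammaVals f Df Ω))
    (Ω' : Set H) (hΩ'ne : Ω'.Nonempty)
    (hcpt : IsCompact (closure Ω')) (hsub : closure Ω' ⊆ Ω)
    (heq : gammaOn f Df Ω' = gammaOn f Df Ω) :
    gammaOn f Df Ω = lipOn Df Ω := by
  set K := gammaOn f Df Ω with hKdef
  set L := lipOn Df Ω with hLdef
  have hLK : L ≤ K := lipOn_le_gammaOn f Df hTay
  clear_value K L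
  refine le_antisymm ?_ hLK
  rcases le_or_gt K 0 with hK0 | hKpos
  · have hL0' := lipOn_nonneg (H := H) Df Ω
    rw [← hLdef] at hL0'
    exact hK0.trans hL0'
  apply le_of_forall_pos_le_add
  intro ε hε
  -- geometric constants
  obtain ⟨δ₀, hδ₀, hthick⟩ := hcpt.exists_thickening_subset_open hΩop hsub
  set r₀ := δ₀/4 with hr₀def
  have hr₀ : 0 < r₀ := by rw [hr₀def]; positivity
  have hball4 : ∀ p ∈ closure Ω', ∀ z : H, dist z p < 4*r₀ → z ∈ Ω := by
    intro p hp z hz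
    apply hthick
    rw [Metric.mem_thickening_iff]
    refine ⟨p, hp, ?_⟩
    rw [hr₀def] at hz
    linarith
  have hdiff : ∀ u ∈ Ω, HasFDerivAt f ((innerSL ℝ) (Df u)) u :=
    fun u hu => hasFDerivAt_of_taylor f Df hTay hΩop hu
  have hlipK : ∀ u ∈ Ω, ∀ v ∈ Ω, ‖Df u - Df v‖ ≤ K * ‖u - v‖ :=
    fun u hu v hv => by
      have h := lip_pair f Df hTay hu hv
      rwa [← hKdef] at h
  have hfC : ContinuousOn f Ω := fun u hu => (hdiff u hu).continuousAt.continuousWithinAt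
  have hDfC : ContinuousOn Df Ω := by
    have hl : LipschitzOnWith (Real.toNNReal K) Df Ω := by
      rw [lipschitzOnWith_iff_dist_le_mul]
      intro u hu v hv
      rw [dist_eq_norm, dist_eq_norm, Real.coe_toNNReal K hKpos.le]
      exact hlipK u hu v hv
    exact hl.continuousOn
  obtain ⟨Mf, hMf⟩ := hcpt.exists_bound_of_continuousOn (hfC.mono hsub)
  obtain ⟨MD, hMD⟩ := hcpt.exists_bound_of_continuousOn (hDfC.mono hsub)
  obtain ⟨p₀, hp₀⟩ := hΩ'ne
  have hMf0 : 0 ≤ Mf := (norm_nonneg _).trans (hMf p₀ (subset_closure hp₀))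
  have hMD0 : 0 ≤ MD := (norm_nonneg _).trans (hMD p₀ (subset_closure hp₀))
  set M₁ := (16*Mf*K + 32*MD^2)/K^2 with hM₁def
  have hM₁0 : 0 ≤ M₁ := by rw [hM₁def]; positivity
  set t := r₀/8 with htdef
  have ht : 0 < t := by rw [htdef]; positivity
  set δ := min (min (ε/2) (K/4)) (ε*t*r₀/(8*M₁+8)) with hδdef
  have hδpos : 0 < δ := by
    rw [hδdef]
    apply lt_min (lt_min (by linarith) (by linarith))
    positivity
  have hδε : δ ≤ ε/2 := (min_le_left _ _).trans (min_le_left _ _)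
  have hδK : δ ≤ K/4 := (min_le_left _ _).trans (min_le_right _ _)
  have hδM : δ ≤ ε*t*r₀/(8*M₁+8) := min_le_right _ _
  clear_value δ M₁
  -- near-optimal pair
  have hsup' : sSup (gammaVals f Df Ω') = K := heq
  have hvals_ne : (gammaVals f Df Ω').Nonempty := by
    by_contra hcon
    rw [Set.not_nonempty_iff_eq_empty] at hcon
    rw [hcon, Real.sSup_empty] at hsup'
    linarith
  obtain ⟨g, hg, hgK⟩ := exists_lt_of_lt_csSup hvals_ne
    (show K - δ < sSup (gammaVals f Df Ω') by rw [hsup']; linarith)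
  obtain ⟨x, hx', y, hy', hxy, rfl⟩ := hg
  have hxΩ : x ∈ Ω := hsub (subset_closure hx')
  have hyΩ : y ∈ Ω := hsub (subset_closure hy')
  have hd : 0 < ‖x - y‖ := by rw [norm_pos_iff]; exact sub_ne_zero_of_ne hxy
  rcases lt_or_ge ‖x - y‖ r₀ with hdsmall | hdlarge
  -- CASE A: the two points are close together
  · have hL0 : 0 ≤ L := by
      have h := lipOn_nonneg (H := H) Df Ω
      rwa [← hLdef] at h
    have hLε : 0 < L + ε/2 := by linarith
    have hLip' : ∀ u ∈ Ω, ∀ v ∈ Ω, ‖Df u - Df v‖ ≤ (L + ε/2) * ‖u - v‖ := by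
      intro u hu v hv
      calc ‖Df u - Df v‖ ≤ L * ‖u - v‖ := by
            have h := lip_bound f Df hTay hu hv
            rwa [← hLdef] at h
        _ ≤ (L + ε/2) * ‖u - v‖ := by nlinarith [norm_nonneg (u - v), hε]
    have hballA : Metric.closedBall x (2*‖x - y‖) ⊆ Ω := by
      intro z hz
      apply hball4 x (subset_closure hx') z
      rw [Metric.mem_closedBall] at hz
      linarith
    have hA := caseA f Df hTay hLε hdiff hLip' hxΩ hyΩ hxy hballA
    linarith
  -- CASE B: the two points are far apart
  · have hgb := qF_bddAbove f Df (x := x) (y := y) hxy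
    have hrange_ne : (Set.range (qF f Df x y)).Nonempty := Set.range_nonempty _
    have hre : sSup (Set.range (qF f Df x y)) = gammaPair f Df x y := rfl
    obtain ⟨qa, hqmem, hqa⟩ := exists_lt_of_lt_csSup hrange_ne
      (show gammaPair f Df x y - δ < sSup (Set.range (qF f Df x y)) by rw [hre]; linarith)
    obtain ⟨a, rfl⟩ := hqmem
    have hqa2 : K - 2*δ < qF f Df x y a := by linarith
    have hDpos : 0 < ‖x - a‖^2 + ‖y - a‖^2 := denom_pos hxy a
    have hqlow : (K - 2*δ) * (‖x - a‖^2 + ‖y - a‖^2)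
        < 2*|fieldEval f Df x a - fieldEval f Df y a| := by
      rw [qF] at hqa2
      exact (lt_div_iff₀ hDpos).mp hqa2
    -- bound on the location of a
    have hNb : |fieldEval f Df x a - fieldEval f Df y a|
        ≤ 2*Mf + MD*‖x - a‖ + MD*‖y - a‖ := by
      have e1 : fieldEval f Df x a - fieldEval f Df y a
          = f x - f y + (⟪Df x, a - x⟫ - ⟪Df y, a - y⟫) := by
        simp only [fieldEval]; ring
      have b1 : |f x| ≤ Mf := by
        have := hMf x (subset_closure hx'); rwa [Real.norm_eq_abs] at this
      have b2 : |f y| ≤ Mf := by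
        have := hMf y (subset_closure hy'); rwa [Real.norm_eq_abs] at this
      have b3 : |⟪Df x, a - x⟫| ≤ MD*‖x - a‖ := by
        calc |⟪Df x, a - x⟫| ≤ ‖Df x‖ * ‖a - x‖ := abs_real_inner_le_norm _ _
          _ ≤ MD * ‖a - x‖ :=
              mul_le_mul_of_nonneg_right (hMD x (subset_closure hx')) (norm_nonneg _)
          _ = MD * ‖x - a‖ := by rw [norm_sub_rev]
      have b4 : |⟪Df y, a - y⟫| ≤ MD*‖y - a‖ := by
        calc |⟪Df y, a - y⟫| ≤ ‖Df y‖ * ‖a - y‖ := abs_real_inner_le_norm _ _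
          _ ≤ MD * ‖a - y‖ :=
              mul_le_mul_of_nonneg_right (hMD y (subset_closure hy')) (norm_nonneg _)
          _ = MD * ‖y - a‖ := by rw [norm_sub_rev]
      rw [e1]
      calc |f x - f y + (⟪Df x, a - x⟫ - ⟪Df y, a - y⟫)|
          ≤ |f x - f y| + |⟪Df x, a - x⟫ - ⟪Df y, a - y⟫| := abs_add_le _ _
        _ ≤ (|f x| + |f y|) + (|⟪Df x, a - x⟫| + |⟪Df y, a - y⟫|) := by
            have u1 := abs_sub (f x) (f y)
            have u2 := abs_sub ⟪Df x, a - x⟫ ⟪Df y, a - y⟫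
            linarith
        _ ≤ 2*Mf + MD*‖x - a‖ + MD*‖y - a‖ := by linarith
    have hDb : ‖x - a‖^2 + ‖y - a‖^2 ≤ M₁ := by
      rw [hM₁def]
      exact Dbound hKpos hδK hqlow hNb hDpos
    -- error-term control
    have hconv : ∀ ρ Dv : ℝ, r₀/2 ≤ ρ → 0 ≤ Dv → Dv ≤ M₁ → 2*δ*Dv/(t*ρ) ≤ ε :=
      fun ρ Dv hρ hDv hDM => convBound hε hδpos hδM hM₁0 ht hr₀ hρ hDv hDM
    -- triangle inequality for the far-endpoint choice
    have hfar : ‖x - y‖ ≤ ‖a - x‖ + ‖a - y‖ := by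
      have h10 := dist_triangle x a y
      rw [dist_eq_norm, dist_eq_norm, dist_eq_norm] at h10
      rw [norm_sub_rev x a] at h10
      exact h10
    set N := fieldEval f Df x a - fieldEval f Df y a with hNdef
    have habsN := abs_nonneg N
    -- produce a Lipschitz quotient close to K
    obtain ⟨p, hp, q, hq, hpq, hb⟩ : ∃ p ∈ Ω, ∃ q ∈ Ω, p ≠ q ∧
        K - ε ≤ ‖Df p - Df q‖ / ‖p - q‖ := by
      rcases le_total (‖a - y‖) (‖a - x‖) with hyx | hyx
      · -- far endpoint is x
        have hρx : r₀/2 ≤ ‖a - x‖ := by linarith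
        have ht2 : 2*t ≤ ‖a - x‖ := by rw [htdef]; rw [htdef] at ht; linarith
        have hρpos : 0 < ‖a - x‖ := by linarith
        have hus := norm_shift (X := x) (a := a) (t := t) ht.le hρpos
        have hu : x + (t/‖a - x‖) • (a - x) ∈ Ω := by
          apply hball4 x (subset_closure hx')
          rw [dist_eq_norm, hus, htdef]
          linarith
        have huy : x + (t/‖a - x‖) • (a - x) ≠ y := by
          intro h
          rw [h] at hus
          rw [norm_sub_rev] at hus
          rw [htdef] at hus
          linarith
        have hbd : 2*δ*(‖x - a‖^2 + ‖y - a‖^2)/(t*‖a - x‖) ≤ ε :=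
          hconv _ _ hρx hDpos.le hDb
        rcases le_total 0 N with hN0 | hN0
        · have hN' : (K - 2*δ) * (‖x - a‖^2 + ‖y - a‖^2) ≤ 2*N := by
            rw [abs_of_nonneg hN0] at hqlow; linarith
          obtain ⟨p, hp, q, hq, hpq, hcb⟩ := caseB f Df hTay hKdef.symm hxΩ hyΩ hxy
            (by linarith : (0:ℝ) ≤ 2*δ) ht ht2 (by rw [hNdef] at hN'; exact hN') hu huy
          exact ⟨p, hp, q, hq, hpq, by linarith⟩
        · have hTay' : BddAbove (gammaVals (fun w => -f w) (fun w => -Df w) Ω) := by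
            rw [gammaVals_neg]; exact hTay
          have hK' : gammaOn (fun w => -f w) (fun w => -Df w) Ω = K :=
            (gammaOn_neg f Df Ω).trans hKdef.symm
          have hN' : (K - 2*δ) * (‖x - a‖^2 + ‖y - a‖^2)
              ≤ 2*(fieldEval (fun w => -f w) (fun w => -Df w) x a
                  - fieldEval (fun w => -f w) (fun w => -Df w) y a) := by
            rw [fieldEval_neg, fieldEval_neg]
            rw [abs_of_nonpos hN0] at hqlow
            have he : -(fieldEval f Df x a) - -(fieldEval f Df y a) = -N := by
              rw [hNdef]; ring
            rw [he]
            linarith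
          obtain ⟨p, hp, q, hq, hpq, hcb⟩ := caseB (fun w => -f w) (fun w => -Df w)
            hTay' hK' hxΩ hyΩ hxy (by linarith : (0:ℝ) ≤ 2*δ) ht ht2 hN' hu huy
          refine ⟨p, hp, q, hq, hpq, ?_⟩
          rw [show (fun w => -Df w) p - (fun w => -Df w) q = -(Df p - Df q) by
            simp; abel, norm_neg] at hcb
          linarith
      · -- far endpoint is y
        have hρy : r₀/2 ≤ ‖a - y‖ := by linarith
        have ht2 : 2*t ≤ ‖a - y‖ := by rw [htdef]; rw [htdef] at ht; linarith
        have hρpos : 0 < ‖a - y‖ := by linarith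
        have hus := norm_shift (X := y) (a := a) (t := t) ht.le hρpos
        have hu : y + (t/‖a - y‖) • (a - y) ∈ Ω := by
          apply hball4 y (subset_closure hy')
          rw [dist_eq_norm, hus, htdef]
          linarith
        have huy : y + (t/‖a - y‖) • (a - y) ≠ x := by
          intro h
          rw [h] at hus
          rw [htdef] at hus
          have : ‖x - y‖ = ‖y - x‖ := norm_sub_rev x y
          linarith
        have hDsym : ‖y - a‖^2 + ‖x - a‖^2 = ‖x - a‖^2 + ‖y - a‖^2 := by ring
        have hbd : 2*δ*(‖y - a‖^2 + ‖x - a‖^2)/(t*‖a - y‖) ≤ ε := by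
          rw [hDsym]; exact hconv _ _ hρy hDpos.le hDb
        rcases le_total 0 N with hN0 | hN0
        · -- use (-f, -Df) with pair (y, x)
          have hTay' : BddAbove (gammaVals (fun w => -f w) (fun w => -Df w) Ω) := by
            rw [gammaVals_neg]; exact hTay
          have hK' : gammaOn (fun w => -f w) (fun w => -Df w) Ω = K :=
            (gammaOn_neg f Df Ω).trans hKdef.symm
          have hN' : (K - 2*δ) * (‖y - a‖^2 + ‖x - a‖^2)
              ≤ 2*(fieldEval (fun w => -f w) (fun w => -Df w) y a
                  - fieldEval (fun w => -f w) (fun w => -Df w) x a) := by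
            rw [fieldEval_neg, fieldEval_neg, hDsym]
            rw [abs_of_nonneg hN0] at hqlow
            have he : -(fieldEval f Df y a) - -(fieldEval f Df x a) = N := by
              rw [hNdef]; ring
            rw [he]
            linarith
          obtain ⟨p, hp, q, hq, hpq, hcb⟩ := caseB (fun w => -f w) (fun w => -Df w)
            hTay' hK' hyΩ hxΩ hxy.symm (by linarith : (0:ℝ) ≤ 2*δ) ht ht2 hN' hu huy
          refine ⟨p, hp, q, hq, hpq, ?_⟩
          rw [show (fun w => -Df w) p - (fun w => -Df w) q = -(Df p - Df q) by
            simp; abel, norm_neg] at hcb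
          linarith
        · have hN' : (K - 2*δ) * (‖y - a‖^2 + ‖x - a‖^2)
              ≤ 2*(fieldEval f Df y a - fieldEval f Df x a) := by
            rw [abs_of_nonpos hN0] at hqlow
            rw [hDsym]
            have : fieldEval f Df y a - fieldEval f Df x a = -N := by rw [hNdef]; ring
            rw [this]
            linarith
          obtain ⟨p, hp, q, hq, hpq, hcb⟩ := caseB f Df hTay hKdef.symm hyΩ hxΩ hxy.symm
            (by linarith : (0:ℝ) ≤ 2*δ) ht ht2 hN' hu huy
          exact ⟨p, hp, q, hq, hpq, by linarith⟩
    have hfin : ‖Df p - Df q‖ / ‖p - q‖ ≤ L := by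
      have h := lipQuot_le_lipOn f Df hTay hp hq hpq
      rwa [← hLdef] at h
    linarith

end Main

end AuxProof

/-- If `Ω` is a nonempty open subset of `ℝⁿ`, `F = (f, Df)` is a Taylorian
1-field on `Ω`, and there is a nonempty `Ω'` with compact closure contained in `Ω` such that
`Γ¹(F;Ω') = Γ¹(F;Ω)`, then `Γ¹(F;Ω) = Lip(Df;Ω)`. -/
theorem stmt_1 {n : ℕ} (hn : 1 ≤ n) (Ω : Set (EuclideanSpace ℝ (Fin n)))
    (hΩne : Ω.Nonempty) (hΩop : IsOpen Ω)
    (f : EuclideanSpace ℝ (Fin n) → ℝ)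
    (Df : EuclideanSpace ℝ (Fin n) → EuclideanSpace ℝ (Fin n))
    (hTay : BddAbove (gammaVals f Df Ω))
    (Ω' : Set (EuclideanSpace ℝ (Fin n))) (hΩ'ne : Ω'.Nonempty)
    (hcpt : IsCompact (closure Ω')) (hsub : closure Ω' ⊆ Ω)
    (heq : gammaOn f Df Ω' = gammaOn f Df Ω) :
    gammaOn f Df Ω = lipOn Df Ω :=
  main_general Ω hΩop f Df hTay Ω' hΩ'ne hcpt hsub heq
end
end

section
/- Let Ω be a nonempty open convex subset of ℝⁿ and let f : Ω → ℝ be differentiable on Ω with Lipschitz gradient, i.e. Lip(∇f;Ω) < +∞. Then the 1-field F associated to f, defined by f_x := f(x) and D_xf := ∇f(x) for x ∈ Ω, satisfies Γ¹(F;Ω) ≤ 2·Lip(∇f;Ω) < +∞; in particular F is Taylorian on Ω. -/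
noncomputable section

open scoped RealInnerProductSpace

set_option maxHeartbeats 1000000

/-- Trapezoid-rule estimate along a segment for a function with Lipschitz gradient. -/
lemma trapezoid_bound {n : ℕ} (Ω : Set (EuclideanSpace ℝ (Fin n))) (hΩconv : Convex ℝ Ω)
    (f : EuclideanSpace ℝ (Fin n) → ℝ) (Df : EuclideanSpace ℝ (Fin n) → EuclideanSpace ℝ (Fin n))
    (hdiff : ∀ x ∈ Ω, HasGradientAt f (Df x) x)
    (L : ℝ) (hL0 : 0 ≤ L) (hL : ∀ a ∈ Ω, ∀ b ∈ Ω, ‖Df a - Df b‖ ≤ L * ‖a - b‖)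
    {x y : EuclideanSpace ℝ (Fin n)} (hx : x ∈ Ω) (hy : y ∈ Ω) :
    |f x - f y - 1 / 2 * ⟪Df x + Df y, x - y⟫| ≤ L / 3 * ‖x - y‖ ^ 2 := by
  set u : ℝ := ‖x - y‖ with hu
  set γ : ℝ → EuclideanSpace ℝ (Fin n) := fun t => y + t • (x - y) with hγ
  have hmem : ∀ t ∈ Set.Icc (0:ℝ) 1, γ t ∈ Ω := by
    intro t ht
    have : γ t = (1 - t) • y + t • x := by
      simp only [hγ]; module
    rw [this]
    exact hΩconv hy hx (by linarith [ht.2]) ht.1 (by ring)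
  have hγ0 : γ 0 = y := by simp [hγ]
  have hγ1 : γ 1 = x := by simp [hγ]
  have hderiv : ∀ t ∈ Set.Icc (0:ℝ) 1,
      HasDerivAt (fun s => f (γ s)) ⟪Df (γ t), x - y⟫ t := by
    intro t ht
    have hf := (hdiff (γ t) (hmem t ht)).hasFDerivAt
    have hγd : HasDerivAt γ (x - y) t := by
      have : HasDerivAt (fun s : ℝ => s • (x - y)) ((1:ℝ) • (x - y)) t :=
        (hasDerivAt_id t).smul_const (x - y)
      have h2 := this.const_add y
      rw [one_smul] at h2
      exact h2
    have := hf.comp_hasDerivAt t hγd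
    simp only [InnerProductSpace.toDual_apply_apply] at this
    exact this
  -- continuity of the integrand
  have hcontD : ContinuousOn (fun t => Df (γ t)) (Set.Icc (0:ℝ) 1) := by
    have : LipschitzOnWith (Real.toNNReal (L * u)) (fun t => Df (γ t)) (Set.Icc (0:ℝ) 1) := by
      apply LipschitzOnWith.of_dist_le_mul
      intro s hs t ht
      have h1 : dist (Df (γ s)) (Df (γ t)) = ‖Df (γ s) - Df (γ t)‖ := dist_eq_norm _ _
      have h2 : ‖γ s - γ t‖ = |s - t| * u := by
        have : γ s - γ t = (s - t) • (x - y) := by simp only [hγ]; module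
        rw [this, norm_smul]; simp [hu, Real.norm_eq_abs]
      rw [h1]
      calc ‖Df (γ s) - Df (γ t)‖ ≤ L * ‖γ s - γ t‖ := hL _ (hmem s hs) _ (hmem t ht)
        _ = (L * u) * |s - t| := by rw [h2]; ring
        _ = Real.toNNReal (L * u) * dist s t := by
            rw [Real.coe_toNNReal _ (by positivity), Real.dist_eq]
    exact this.continuousOn
  have hcont : ContinuousOn (fun t => ⟪Df (γ t), x - y⟫) (Set.Icc (0:ℝ) 1) :=
    hcontD.inner continuousOn_const
  have hIcc : Set.uIcc (0:ℝ) 1 = Set.Icc 0 1 := Set.uIcc_of_le zero_le_one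
  have hint : IntervalIntegrable (fun t => ⟪Df (γ t), x - y⟫) MeasureTheory.volume 0 1 :=
    (by rwa [hIcc] : ContinuousOn _ (Set.uIcc (0:ℝ) 1)).intervalIntegrable
  have hFTC : ∫ t in (0:ℝ)..1, ⟪Df (γ t), x - y⟫ = f x - f y := by
    have := intervalIntegral.integral_eq_sub_of_hasDerivAt
      (f := fun s => f (γ s)) (f' := fun t => ⟪Df (γ t), x - y⟫)
      (fun t ht => hderiv t (by rwa [hIcc] at ht)) hint
    simpa [hγ0, hγ1] using this
  -- the affine comparison function
  set g : ℝ → ℝ := fun t => ⟪Df (γ t), x - y⟫ - ((1 - t) * ⟪Df y, x - y⟫ + t * ⟪Df x, x - y⟫)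
    with hg
  have hc1 : Continuous fun t : ℝ => (1 - t) * ⟪Df y, x - y⟫ + t * ⟪Df x, x - y⟫ :=
    ((continuous_const.sub continuous_id).mul continuous_const).add
      (continuous_id.mul continuous_const)
  have hint2 : IntervalIntegrable
      (fun t => (1 - t) * ⟪Df y, x - y⟫ + t * ⟪Df x, x - y⟫) MeasureTheory.volume 0 1 :=
    (Continuous.intervalIntegrable hc1 0 1)
  have hintg : IntervalIntegrable g MeasureTheory.volume 0 1 := hint.sub hint2
  have hI2 : ∫ t in (0:ℝ)..1, ((1 - t) * ⟪Df y, x - y⟫ + t * ⟪Df x, x - y⟫)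
      = 1 / 2 * ⟪Df x + Df y, x - y⟫ := by
    have hfun : (fun t : ℝ => (1 - t) * ⟪Df y, x - y⟫ + t * ⟪Df x, x - y⟫)
        = fun t : ℝ => t * (⟪Df x, x - y⟫ - ⟪Df y, x - y⟫) + ⟪Df y, x - y⟫ := by
      funext t; ring
    have h1 : IntervalIntegrable (fun t : ℝ => t * (⟪Df x, x - y⟫ - ⟪Df y, x - y⟫))
        MeasureTheory.volume 0 1 := by
      apply Continuous.intervalIntegrable; fun_prop
    rw [hfun, intervalIntegral.integral_add h1 intervalIntegrable_const,
      intervalIntegral.integral_mul_const, integral_id, intervalIntegral.integral_const,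
      inner_add_left]
    norm_num; ring
  have hIg : ∫ t in (0:ℝ)..1, g t = f x - f y - 1 / 2 * ⟪Df x + Df y, x - y⟫ := by
    rw [hg]
    rw [intervalIntegral.integral_sub hint hint2, hFTC, hI2]
  -- pointwise bound
  have hgb : ∀ t ∈ Set.Icc (0:ℝ) 1, |g t| ≤ 2 * t * (1 - t) * (L * u ^ 2) := by
    intro t ht
    obtain ⟨ht0, ht1⟩ := ht
    have hrw : g t = ⟪Df (γ t) - ((1 - t) • Df y + t • Df x), x - y⟫ := by
      simp only [hg, inner_sub_left, inner_add_left, real_inner_smul_left]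
    rw [hrw]
    have h1 : ‖Df (γ t) - ((1 - t) • Df y + t • Df x)‖ ≤ 2 * t * (1 - t) * (L * u) := by
      have hdecomp : Df (γ t) - ((1 - t) • Df y + t • Df x)
          = (1 - t) • (Df (γ t) - Df y) + t • (Df (γ t) - Df x) := by module
      have hy' : ‖Df (γ t) - Df y‖ ≤ L * (t * u) := by
        have := hL _ (hmem t ⟨ht0, ht1⟩) _ hy
        have hne : ‖γ t - y‖ = t * u := by
          have : γ t - y = t • (x - y) := by simp only [hγ]; module
          rw [this, norm_smul]; simp [hu, Real.norm_eq_abs, abs_of_nonneg ht0]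
        rwa [hne] at this
      have hx' : ‖Df (γ t) - Df x‖ ≤ L * ((1 - t) * u) := by
        have := hL _ (hmem t ⟨ht0, ht1⟩) _ hx
        have hne : ‖γ t - x‖ = (1 - t) * u := by
          have : γ t - x = (t - 1) • (x - y) := by simp only [hγ]; module
          rw [this, norm_smul]; simp only [hu, Real.norm_eq_abs]
          rw [abs_of_nonpos (by linarith)]; ring
        rwa [hne] at this
      rw [hdecomp]
      calc ‖(1 - t) • (Df (γ t) - Df y) + t • (Df (γ t) - Df x)‖
          ≤ ‖(1 - t) • (Df (γ t) - Df y)‖ + ‖t • (Df (γ t) - Df x)‖ := norm_add_le _ _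
        _ = (1 - t) * ‖Df (γ t) - Df y‖ + t * ‖Df (γ t) - Df x‖ := by
            rw [norm_smul, norm_smul, Real.norm_eq_abs, Real.norm_eq_abs,
              abs_of_nonneg (by linarith : (0:ℝ) ≤ 1 - t), abs_of_nonneg ht0]
        _ ≤ (1 - t) * (L * (t * u)) + t * (L * ((1 - t) * u)) :=
            add_le_add (mul_le_mul_of_nonneg_left hy' (by linarith))
              (mul_le_mul_of_nonneg_left hx' ht0)
        _ = 2 * t * (1 - t) * (L * u) := by ring
    calc |⟪Df (γ t) - ((1 - t) • Df y + t • Df x), x - y⟫|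
        ≤ ‖Df (γ t) - ((1 - t) • Df y + t • Df x)‖ * ‖x - y‖ := abs_real_inner_le_norm _ _
      _ ≤ (2 * t * (1 - t) * (L * u)) * u :=
          mul_le_mul_of_nonneg_right h1 (norm_nonneg _)
      _ = 2 * t * (1 - t) * (L * u ^ 2) := by ring
  -- conclude
  rw [← hIg]
  calc |∫ t in (0:ℝ)..1, g t| ≤ ∫ t in (0:ℝ)..1, |g t| := by
        simpa [Real.norm_eq_abs] using
          intervalIntegral.norm_integral_le_integral_norm (f := g) (μ := MeasureTheory.volume)
            zero_le_one
    _ ≤ ∫ t in (0:ℝ)..1, 2 * t * (1 - t) * (L * u ^ 2) := by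
        have hc2 : Continuous fun t : ℝ => 2 * t * (1 - t) * (L * u ^ 2) :=
          ((continuous_const.mul continuous_id).mul (continuous_const.sub continuous_id)).mul
            continuous_const
        exact intervalIntegral.integral_mono_on zero_le_one hintg.abs
          (Continuous.intervalIntegrable hc2 0 1) hgb
    _ = L / 3 * u ^ 2 := by
        have : ∀ t : ℝ, 2 * t * (1 - t) * (L * u ^ 2)
            = (2 * (L * u ^ 2)) * t - (2 * (L * u ^ 2)) * t ^ 2 := by intro t; ring
        simp only [this]
        have h1 : IntervalIntegrable (fun t : ℝ => 2 * (L * u ^ 2) * t)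
            MeasureTheory.volume 0 1 := by apply Continuous.intervalIntegrable; fun_prop
        have h2 : IntervalIntegrable (fun t : ℝ => 2 * (L * u ^ 2) * t ^ 2)
            MeasureTheory.volume 0 1 := by apply Continuous.intervalIntegrable; fun_prop
        rw [intervalIntegral.integral_sub h1 h2,
          intervalIntegral.integral_const_mul, intervalIntegral.integral_const_mul,
          integral_id, integral_pow]
        norm_num
        ring

/-- If `Ω ⊆ ℝⁿ` is nonempty, open and convex, `f : Ω → ℝ` is differentiable
on `Ω` with gradient `Df` satisfying `Lip(Df;Ω) < +∞`, then the associated 1-field `F` (given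
by `f_x := f x` and `D_xf := Df x`) satisfies `Γ¹(F;Ω) ≤ 2 Lip(Df;Ω) < +∞`; in particular `F`
is Taylorian on `Ω`. -/
theorem stmt_3 {n : ℕ} (hn : 1 ≤ n) (Ω : Set (EuclideanSpace ℝ (Fin n)))
    (hΩne : Ω.Nonempty) (hΩop : IsOpen Ω) (hΩconv : Convex ℝ Ω)
    (f : EuclideanSpace ℝ (Fin n) → ℝ)
    (Df : EuclideanSpace ℝ (Fin n) → EuclideanSpace ℝ (Fin n))
    (hdiff : ∀ x ∈ Ω, HasGradientAt f (Df x) x)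
    (hLip : BddAbove (lipVals Df Ω)) :
    gammaOn f Df Ω ≤ 2 * lipOn Df Ω ∧ BddAbove (gammaVals f Df Ω) := by
  set L := lipOn Df Ω with hLdef
  have hL0 : 0 ≤ L := by
    apply Real.sSup_nonneg
    rintro t ⟨a, -, b, -, -, rfl⟩
    positivity
  have hL : ∀ a ∈ Ω, ∀ b ∈ Ω, ‖Df a - Df b‖ ≤ L * ‖a - b‖ := by
    intro a ha b hb
    rcases eq_or_ne a b with rfl | hab
    · simp
    · have hmem : ‖Df a - Df b‖ / ‖a - b‖ ∈ lipVals Df Ω := ⟨a, ha, b, hb, hab, rfl⟩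
      have hle : ‖Df a - Df b‖ / ‖a - b‖ ≤ L := le_csSup hLip hmem
      have hpos : (0:ℝ) < ‖a - b‖ := by
        rw [norm_pos_iff]; exact sub_ne_zero_of_ne hab
      calc ‖Df a - Df b‖ = ‖Df a - Df b‖ / ‖a - b‖ * ‖a - b‖ := by field_simp
        _ ≤ L * ‖a - b‖ := mul_le_mul_of_nonneg_right hle hpos.le
  have key : ∀ x ∈ Ω, ∀ y ∈ Ω, x ≠ y → gammaPair f Df x y ≤ 2 * L := by
    intro x hx y hy hxy
    apply ciSup_le
    intro a
    have hu : (0:ℝ) < ‖x - y‖ := by rw [norm_pos_iff]; exact sub_ne_zero_of_ne hxy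
    set u : ℝ := ‖x - y‖ with hu'
    set τ : ℝ := ‖(a - x) + (a - y)‖ with hτ'
    -- denominator via parallelogram law
    have hden : ‖x - a‖ ^ 2 + ‖y - a‖ ^ 2 = (τ ^ 2 + u ^ 2) / 2 := by
      have hpar := parallelogram_law_with_norm ℝ (x - a) (y - a)
      have h1 : (x - a) + (y - a) = -((a - x) + (a - y)) := by abel
      have h2 : (x - a) - (y - a) = x - y := by abel
      rw [h1, h2, norm_neg] at hpar
      rw [hu', hτ']
      nlinarith [hpar]
    have hdenpos : (0:ℝ) < ‖x - a‖ ^ 2 + ‖y - a‖ ^ 2 := by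
      rw [hden]; positivity
    -- decomposition of the numerator
    have hdec : fieldEval f Df x a - fieldEval f Df y a
        = (f x - f y - 1 / 2 * ⟪Df x + Df y, x - y⟫)
          + 1 / 2 * ⟪Df x - Df y, (a - x) + (a - y)⟫ := by
      simp only [fieldEval, inner_add_left, inner_sub_left, inner_add_right, inner_sub_right]
      ring
    have hc := trapezoid_bound Ω hΩconv f Df hdiff L hL0 hL hx hy
    have hw : |⟪Df x - Df y, (a - x) + (a - y)⟫| ≤ (L * u) * τ := by
      calc |⟪Df x - Df y, (a - x) + (a - y)⟫| ≤ ‖Df x - Df y‖ * τ := by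
            rw [hτ']; exact abs_real_inner_le_norm _ _
        _ ≤ (L * u) * τ := by
            apply mul_le_mul_of_nonneg_right _ (hτ' ▸ norm_nonneg _)
            rw [hu']; exact hL x hx y hy
    have hnum : |fieldEval f Df x a - fieldEval f Df y a| ≤ L / 3 * u ^ 2 + 1 / 2 * ((L * u) * τ) := by
      rw [hdec]
      calc |(f x - f y - 1 / 2 * ⟪Df x + Df y, x - y⟫)
            + 1 / 2 * ⟪Df x - Df y, (a - x) + (a - y)⟫|
          ≤ |f x - f y - 1 / 2 * ⟪Df x + Df y, x - y⟫|
            + |1 / 2 * ⟪Df x - Df y, (a - x) + (a - y)⟫| := abs_add_le _ _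
        _ ≤ L / 3 * u ^ 2 + 1 / 2 * ((L * u) * τ) := by
            apply add_le_add (hu' ▸ hc)
            rw [abs_mul]
            rw [abs_of_nonneg (by norm_num : (0:ℝ) ≤ 1/2)]
            linarith [hw]
    have hτ0 : 0 ≤ τ := hτ' ▸ norm_nonneg _
    rw [div_le_iff₀ hdenpos, hden]
    have hfinal : L / 3 * u ^ 2 + 1 / 2 * ((L * u) * τ) ≤ L * ((τ ^ 2 + u ^ 2) / 2) := by
      nlinarith [sq_nonneg (2 * τ - u), mul_nonneg hL0 (sq_nonneg (2 * τ - u))]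
    linarith [hnum]
  refine ⟨?_, ⟨2 * L, ?_⟩⟩
  · apply Real.sSup_le
    · rintro t ⟨x, hx, y, hy, hxy, rfl⟩
      exact key x hx y hy hxy
    · positivity
  · rintro t ⟨x, hx, y, hy, hxy, rfl⟩
    exact key x hx y hy hxy
end
end

section
/- There exist a nonempty open convex set Ω ⊆ ℝ² and a Taylorian 1-field F on Ω such that Lip(Df;Ω) < Γ¹(F;Ω). -/
noncomputable section

open scoped RealInnerProductSpace

section Stmt5Aux
set_option maxHeartbeats 1000000

lemma le_of_sq_le_sq' (a b : ℝ) (h : a^2 ≤ b^2) (hb : 0 ≤ b) : a ≤ b := by nlinarith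

lemma s5XY_bound (x1 x2 y1 y2 : ℝ) (hx1 : |x1| ≤ 101/100) (hy1 : |y1| ≤ 101/100)
    (hx2 : |x2| ≤ 1/100) (hy2 : |y2| ≤ 1/100) :
    ((3:ℝ)/16*(x1+y1))^2 + (1 + 3/16*(x2+y2))^2 ≤ 729/625 := by
  rw [abs_le] at hx1 hy1 hx2 hy2
  nlinarith [hx1.1, hx1.2, hy1.1, hy1.2, hx2.1, hx2.2, hy2.1, hy2.2]

lemma s5E_bound (d1 d2 : ℝ) (hd1 : |d1| ≤ 202/100) :
    |(1:ℝ)/32 * d1 * (d1^2 - 3*d2^2)| ≤ (1/5) * (d1^2 + d2^2) := by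
  rw [abs_le] at hd1 ⊢
  have p1 : 0 ≤ (202/100 - d1) * d1^2 := mul_nonneg (by linarith [hd1.2]) (sq_nonneg d1)
  have p2 : 0 ≤ (202/100 + d1) * d1^2 := mul_nonneg (by linarith [hd1.1]) (sq_nonneg d1)
  have p3 : 0 ≤ (202/100 - d1) * d2^2 := mul_nonneg (by linarith [hd1.2]) (sq_nonneg d2)
  have p4 : 0 ≤ (202/100 + d1) * d2^2 := mul_nonneg (by linarith [hd1.1]) (sq_nonneg d2)
  constructor <;> [nlinarith [p2, p3]; nlinarith [p1, p4]]

lemma s5core (d1 d2 c1 c2 X Y E : ℝ)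
    (hXY : X^2 + Y^2 ≤ 729/625)
    (hE : |E| ≤ (1/5) * (d1^2 + d2^2)) :
    2 * |E + ((-X*d1 + Y*d2)*c1 + (Y*d1 + X*d2)*c2)|
      ≤ 2 * (2*(c1^2 + c2^2) + (d1^2 + d2^2)/2) := by
  have hC : (0:ℝ) ≤ c1^2 + c2^2 := by positivity
  have hD : (0:ℝ) ≤ d1^2 + d2^2 := by positivity
  have hcs : ((-X*d1 + Y*d2)*c1 + (Y*d1 + X*d2)*c2)^2
      ≤ (X^2 + Y^2) * ((d1^2 + d2^2) * (c1^2 + c2^2)) := by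
    nlinarith [sq_nonneg ((-X*d1 + Y*d2)*c2 - (Y*d1 + X*d2)*c1)]
  have h2 : (X^2 + Y^2) * ((d1^2 + d2^2) * (c1^2 + c2^2))
      ≤ (729/625) * ((d1^2 + d2^2) * (c1^2 + c2^2)) :=
    mul_le_mul_of_nonneg_right hXY (mul_nonneg hD hC)
  have h3 : ((-X*d1 + Y*d2)*c1 + (Y*d1 + X*d2)*c2)^2
      ≤ (2*(c1^2 + c2^2) + (3/10)*(d1^2 + d2^2))^2 := by
    nlinarith [mul_nonneg hC hD, sq_nonneg (c1^2 + c2^2), sq_nonneg (d1^2 + d2^2)]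
  have hb : (0:ℝ) ≤ 2*(c1^2 + c2^2) + (3/10)*(d1^2 + d2^2) := by positivity
  have h4 : (-X*d1 + Y*d2)*c1 + (Y*d1 + X*d2)*c2 ≤ 2*(c1^2 + c2^2) + (3/10)*(d1^2 + d2^2) :=
    le_of_sq_le_sq' _ _ h3 hb
  have h5 : -((-X*d1 + Y*d2)*c1 + (Y*d1 + X*d2)*c2) ≤ 2*(c1^2 + c2^2) + (3/10)*(d1^2 + d2^2) :=
    le_of_sq_le_sq' _ _ (by nlinarith [h3]) hb
  have h6 : |(-X*d1 + Y*d2)*c1 + (Y*d1 + X*d2)*c2| ≤ 2*(c1^2 + c2^2) + (3/10)*(d1^2 + d2^2) :=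
    abs_le.mpr ⟨by linarith, h4⟩
  linarith [abs_add_le E ((-X*d1 + Y*d2)*c1 + (Y*d1 + X*d2)*c2), hE, h6]

lemma master (x1 x2 y1 y2 a1 a2 : ℝ)
    (hx1 : |x1| ≤ 101/100) (hy1 : |y1| ≤ 101/100) (hx2 : |x2| ≤ 1/100) (hy2 : |y2| ≤ 1/100) :
    2 * |(-(1/16)*x1^3 + (3/16)*x1*x2^2 + x1*x2 + (3/16)*x1)
        - (-(1/16)*y1^3 + (3/16)*y1*y2^2 + y1*y2 + (3/16)*y1)
        + ((-(3/16)*x1^2 + (3/16)*x2^2 + x2 + 3/16)*(a1-x1) + ((3/8)*x1*x2 + x1)*(a2-x2))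
        - ((-(3/16)*y1^2 + (3/16)*y2^2 + y2 + 3/16)*(a1-y1) + ((3/8)*y1*y2 + y1)*(a2-y2))|
      ≤ 2 * (((x1-a1)^2+(x2-a2)^2) + ((y1-a1)^2+(y2-a2)^2)) := by
  have hd1 : |x1 - y1| ≤ 202/100 := by
    rw [abs_le] at hx1 hy1 ⊢
    exact ⟨by linarith [hx1.1, hy1.2], by linarith [hx1.2, hy1.1]⟩
  have hXY := s5XY_bound x1 x2 y1 y2 hx1 hy1 hx2 hy2
  have hE := s5E_bound (x1 - y1) (x2 - y2) hd1
  have key := s5core (x1 - y1) (x2 - y2) (a1 - (x1+y1)/2) (a2 - (x2+y2)/2)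
      ((3:ℝ)/16*(x1+y1)) (1 + (3:ℝ)/16*(x2+y2))
      ((1:ℝ)/32 * (x1 - y1) * ((x1 - y1)^2 - 3*(x2 - y2)^2)) hXY hE
  have e1 : (-(1/16)*x1^3 + (3/16)*x1*x2^2 + x1*x2 + (3/16)*x1)
        - (-(1/16)*y1^3 + (3/16)*y1*y2^2 + y1*y2 + (3/16)*y1)
        + ((-(3/16)*x1^2 + (3/16)*x2^2 + x2 + 3/16)*(a1-x1) + ((3/8)*x1*x2 + x1)*(a2-x2))
        - ((-(3/16)*y1^2 + (3/16)*y2^2 + y2 + 3/16)*(a1-y1) + ((3/8)*y1*y2 + y1)*(a2-y2))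
      = (1:ℝ)/32 * (x1 - y1) * ((x1 - y1)^2 - 3*(x2 - y2)^2)
        + ((-((3:ℝ)/16*(x1+y1))*(x1 - y1) + (1 + (3:ℝ)/16*(x2+y2))*(x2 - y2))*(a1 - (x1+y1)/2)
          + ((1 + (3:ℝ)/16*(x2+y2))*(x1 - y1) + ((3:ℝ)/16*(x1+y1))*(x2 - y2))*(a2 - (x2+y2)/2)) := by
    ring
  have e2 : 2 * ((((x1-a1)^2+(x2-a2)^2) + ((y1-a1)^2+(y2-a2)^2)) : ℝ)
      = 2 * (2*((a1 - (x1+y1)/2)^2 + (a2 - (x2+y2)/2)^2) + ((x1 - y1)^2 + (x2 - y2)^2)/2) := by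
    ring
  rw [e1, e2]
  exact key

noncomputable def s5pt (a b : ℝ) : EuclideanSpace ℝ (Fin 2) := (WithLp.equiv 2 (Fin 2 → ℝ)).symm ![a, b]

noncomputable def s5f (z : EuclideanSpace ℝ (Fin 2)) : ℝ :=
  -(1/16)*(z 0)^3 + (3/16)*(z 0)*(z 1)^2 + (z 0)*(z 1) + (3/16)*(z 0)

noncomputable def s5D (z : EuclideanSpace ℝ (Fin 2)) : EuclideanSpace ℝ (Fin 2) :=
  s5pt (-(3/16)*(z 0)^2 + (3/16)*(z 1)^2 + (z 1) + 3/16) ((3/8)*(z 0)*(z 1) + (z 0))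

def s5Ω : Set (EuclideanSpace ℝ (Fin 2)) := {z | |z 0| < 101/100 ∧ |z 1| < 1/100}

lemma s5inner (x y : EuclideanSpace ℝ (Fin 2)) : ⟪x, y⟫ = x 0 * y 0 + x 1 * y 1 := by
  simp [PiLp.inner_apply, Fin.sum_univ_two, RCLike.inner_apply, conj_trivial]; ring

lemma s5normsq (x : EuclideanSpace ℝ (Fin 2)) : ‖x‖^2 = (x 0)^2 + (x 1)^2 := by
  rw [← real_inner_self_eq_norm_sq]
  rw [s5inner]; ring

lemma s5sub0 (x y : EuclideanSpace ℝ (Fin 2)) : (x - y) 0 = x 0 - y 0 := rfl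
lemma s5sub1 (x y : EuclideanSpace ℝ (Fin 2)) : (x - y) 1 = x 1 - y 1 := rfl
lemma s5D0 (z : EuclideanSpace ℝ (Fin 2)) : s5D z 0 = -(3/16)*(z 0)^2 + (3/16)*(z 1)^2 + (z 1) + 3/16 := rfl
lemma s5D1 (z : EuclideanSpace ℝ (Fin 2)) : s5D z 1 = (3/8)*(z 0)*(z 1) + (z 0) := rfl
lemma s5pt0 (a b : ℝ) : s5pt a b 0 = a := rfl
lemma s5pt1 (a b : ℝ) : s5pt a b 1 = b := rfl

lemma s5diff (x y a : EuclideanSpace ℝ (Fin 2)) :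
    fieldEval s5f s5D x a - fieldEval s5f s5D y a
      = (-(1/16)*(x 0)^3 + (3/16)*(x 0)*(x 1)^2 + (x 0)*(x 1) + (3/16)*(x 0))
        - (-(1/16)*(y 0)^3 + (3/16)*(y 0)*(y 1)^2 + (y 0)*(y 1) + (3/16)*(y 0))
        + ((-(3/16)*(x 0)^2 + (3/16)*(x 1)^2 + (x 1) + 3/16)*(a 0-(x 0)) + ((3/8)*(x 0)*(x 1) + (x 0))*(a 1-(x 1)))
        - ((-(3/16)*(y 0)^2 + (3/16)*(y 1)^2 + (y 1) + 3/16)*(a 0-(y 0)) + ((3/8)*(y 0)*(y 1) + (y 0))*(a 1-(y 1))) := by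
  simp only [fieldEval, s5inner, s5sub0, s5sub1, s5D0, s5D1, s5f]
  ring

lemma s5normdiff (x a : EuclideanSpace ℝ (Fin 2)) : ‖x - a‖^2 = (x 0 - a 0)^2 + (x 1 - a 1)^2 := by
  rw [s5normsq, s5sub0, s5sub1]

lemma s5denpos (x y a : EuclideanSpace ℝ (Fin 2)) (hxy : x ≠ y) :
    0 < ‖x - a‖^2 + ‖y - a‖^2 := by
  rcases eq_or_ne x a with rfl | h
  · have h1 : 0 < ‖y - x‖ := norm_sub_pos_iff.mpr (Ne.symm hxy)
    have h2 : 0 < ‖y - x‖^2 := by positivity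
    have h3 : 0 ≤ ‖x - x‖^2 := sq_nonneg _
    linarith
  · have h1 : 0 < ‖x - a‖ := norm_sub_pos_iff.mpr h
    have h2 : 0 < ‖x - a‖^2 := by positivity
    have h3 : 0 ≤ ‖y - a‖^2 := sq_nonneg _
    linarith

lemma s5pair_bound (x y : EuclideanSpace ℝ (Fin 2)) (hx : x ∈ s5Ω) (hy : y ∈ s5Ω)
    (a : EuclideanSpace ℝ (Fin 2)) :
    2 * |fieldEval s5f s5D x a - fieldEval s5f s5D y a| ≤ 2 * (‖x - a‖^2 + ‖y - a‖^2) := by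
  rw [s5diff, s5normdiff x a, s5normdiff y a]
  exact master (x 0) (x 1) (y 0) (y 1) (a 0) (a 1) hx.1.le hy.1.le hx.2.le hy.2.le

lemma s5ratio_bound (x y : EuclideanSpace ℝ (Fin 2)) (hx : x ∈ s5Ω) (hy : y ∈ s5Ω)
    (hxy : x ≠ y) (a : EuclideanSpace ℝ (Fin 2)) :
    2 * |fieldEval s5f s5D x a - fieldEval s5f s5D y a| / (‖x - a‖^2 + ‖y - a‖^2) ≤ 2 := by
  rw [div_le_iff₀ (s5denpos x y a hxy)]
  have := s5pair_bound x y hx hy a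
  linarith

lemma s5lipscalar (x1 x2 y1 y2 : ℝ)
    (hx1 : |x1| ≤ 101/100) (hy1 : |y1| ≤ 101/100) (hx2 : |x2| ≤ 1/100) (hy2 : |y2| ≤ 1/100) :
    ((-(3/16)*x1^2 + (3/16)*x2^2 + x2 + 3/16) - (-(3/16)*y1^2 + (3/16)*y2^2 + y2 + 3/16))^2
      + (((3/8)*x1*x2 + x1) - ((3/8)*y1*y2 + y1))^2
      ≤ (27/25)^2 * ((x1-y1)^2 + (x2-y2)^2) := by
  have hXY := s5XY_bound x1 x2 y1 y2 hx1 hy1 hx2 hy2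
  have hid : ((-(3/16)*x1^2 + (3/16)*x2^2 + x2 + 3/16) - (-(3/16)*y1^2 + (3/16)*y2^2 + y2 + 3/16))^2
      + (((3/8)*x1*x2 + x1) - ((3/8)*y1*y2 + y1))^2
      = (((3:ℝ)/16*(x1+y1))^2 + (1 + (3:ℝ)/16*(x2+y2))^2) * ((x1-y1)^2 + (x2-y2)^2) := by ring
  have h729 : ((27:ℝ)/25)^2 = 729/625 := by norm_num
  rw [hid, h729]
  exact mul_le_mul_of_nonneg_right hXY (by positivity)

lemma s5lip (x y : EuclideanSpace ℝ (Fin 2)) (hx : x ∈ s5Ω) (hy : y ∈ s5Ω) :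
    ‖s5D x - s5D y‖ ≤ (27/25) * ‖x - y‖ := by
  apply le_of_sq_le_sq' _ _ _ (by positivity)
  rw [mul_pow, s5normdiff (s5D x) (s5D y), s5normdiff x y, s5D0, s5D0, s5D1, s5D1]
  exact s5lipscalar (x 0) (x 1) (y 0) (y 1) hx.1.le hy.1.le hx.2.le hy.2.le

lemma s5combo (a b u v c : ℝ) (ha : 0 ≤ a) (hb : 0 ≤ b) (hab : a + b = 1)
    (hu : |u| < c) (hv : |v| < c) : |a*u + b*v| < c := by
  rw [abs_lt] at hu hv ⊢
  rcases eq_or_lt_of_le ha with h | h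
  · have ha0 : a = 0 := h.symm
    have hb1 : b = 1 := by linarith
    subst ha0; subst hb1
    constructor <;> [nlinarith; nlinarith]
  · have k1 : 0 < a * (c - u) := mul_pos h (by linarith)
    have k2 : 0 ≤ b * (c - v) := mul_nonneg hb (by linarith)
    have k3 : 0 < a * (c + u) := mul_pos h (by linarith)
    have k4 : 0 ≤ b * (c + v) := mul_nonneg hb (by linarith)
    constructor <;> nlinarith

lemma s5gamma_le (x y : EuclideanSpace ℝ (Fin 2)) (hx : x ∈ s5Ω) (hy : y ∈ s5Ω)
    (hxy : x ≠ y) : gammaPair s5f s5D x y ≤ 2 :=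
  Real.iSup_le (fun a => s5ratio_bound x y hx hy hxy a) (by norm_num)

lemma s5bddAbove : BddAbove (gammaVals s5f s5D s5Ω) := by
  refine ⟨2, fun t ht => ?_⟩
  simp only [gammaVals, Set.mem_setOf_eq] at ht
  obtain ⟨x, hx, y, hy, hxy, rfl⟩ := ht
  exact s5gamma_le x y hx hy hxy

end Stmt5Aux


/-- There exist a nonempty open convex set `Ω ⊆ ℝ²` and a Taylorian
1-field `F = (f, Df)` on `Ω` with `Lip(Df;Ω) < Γ¹(F;Ω)`. -/
theorem stmt_5 :
    ∃ (Ω : Set (EuclideanSpace ℝ (Fin 2))) (f : EuclideanSpace ℝ (Fin 2) → ℝ)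
      (Df : EuclideanSpace ℝ (Fin 2) → EuclideanSpace ℝ (Fin 2)),
      Ω.Nonempty ∧ IsOpen Ω ∧ Convex ℝ Ω ∧ BddAbove (gammaVals f Df Ω) ∧
        lipOn Df Ω < gammaOn f Df Ω := by
  have hQ : s5pt 1 0 ∈ s5Ω :=
    ⟨by rw [s5pt0]; norm_num, by rw [s5pt1]; norm_num⟩
  have hP : s5pt (-1) 0 ∈ s5Ω :=
    ⟨by rw [s5pt0]; norm_num, by rw [s5pt1]; norm_num⟩
  have hne : s5pt 1 0 ≠ s5pt (-1) 0 := by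
    intro h
    have h0 : (1:ℝ) = -1 := congrArg (fun z : EuclideanSpace ℝ (Fin 2) => z 0) h
    norm_num at h0
  refine ⟨s5Ω, s5f, s5D, ⟨s5pt 0 0, by exact ⟨by rw [s5pt0]; norm_num, by rw [s5pt1]; norm_num⟩⟩, ?_, ?_, s5bddAbove, ?_⟩
  · -- open
    have hrw : s5Ω = (fun z : EuclideanSpace ℝ (Fin 2) => z 0) ⁻¹' (Set.Ioo (-(101/100)) (101/100))
        ∩ (fun z : EuclideanSpace ℝ (Fin 2) => z 1) ⁻¹' (Set.Ioo (-(1/100)) (1/100)) := by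
      ext z
      simp only [s5Ω, Set.mem_setOf_eq, Set.mem_inter_iff, Set.mem_preimage, Set.mem_Ioo, abs_lt]
    rw [hrw]
    have hc0 : Continuous (fun z : EuclideanSpace ℝ (Fin 2) => z 0) :=
      (EuclideanSpace.proj (0 : Fin 2) : EuclideanSpace ℝ (Fin 2) →L[ℝ] ℝ).continuous
    have hc1 : Continuous (fun z : EuclideanSpace ℝ (Fin 2) => z 1) :=
      (EuclideanSpace.proj (1 : Fin 2) : EuclideanSpace ℝ (Fin 2) →L[ℝ] ℝ).continuous
    exact (isOpen_Ioo.preimage hc0).inter (isOpen_Ioo.preimage hc1)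
  · -- convex
    intro x hx y hy a b ha hb hab
    have h0 : (a • x + b • y) 0 = a * x 0 + b * y 0 := rfl
    have h1 : (a • x + b • y) 1 = a * x 1 + b * y 1 := rfl
    exact ⟨by rw [h0]; exact s5combo a b (x 0) (y 0) _ ha hb hab hx.1 hy.1,
           by rw [h1]; exact s5combo a b (x 1) (y 1) _ ha hb hab hx.2 hy.2⟩
  · -- strict inequality
    have hlip : lipOn s5D s5Ω ≤ 27/25 := by
      apply Real.sSup_le _ (by norm_num)
      rintro t ht
      simp only [lipVals, Set.mem_setOf_eq] at ht
      obtain ⟨x, hx, y, hy, hxy, rfl⟩ := ht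
      rw [div_le_iff₀ (norm_sub_pos_iff.mpr hxy)]
      exact s5lip x y hx hy
    have hval : 2 * |fieldEval s5f s5D (s5pt 1 0) (s5pt 0 (7/8)) - fieldEval s5f s5D (s5pt (-1) 0) (s5pt 0 (7/8))|
        / (‖s5pt 1 0 - s5pt 0 (7/8)‖^2 + ‖s5pt (-1) 0 - s5pt 0 (7/8)‖^2) = 128/113 := by
      rw [s5diff, s5normdiff, s5normdiff]
      simp only [s5pt0, s5pt1]
      norm_num
    have h1 : (128/113 : ℝ) ≤ gammaPair s5f s5D (s5pt 1 0) (s5pt (-1) 0) := by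
      have hrange : BddAbove (Set.range fun a : EuclideanSpace ℝ (Fin 2) =>
          2 * |fieldEval s5f s5D (s5pt 1 0) a - fieldEval s5f s5D (s5pt (-1) 0) a|
            / (‖s5pt 1 0 - a‖^2 + ‖s5pt (-1) 0 - a‖^2)) := by
        refine ⟨2, fun t ht => ?_⟩
        obtain ⟨a, rfl⟩ := ht
        exact s5ratio_bound _ _ hQ hP hne a
      have := le_ciSup hrange (s5pt 0 (7/8))
      rw [hval] at this
      exact this
    have h2 : gammaPair s5f s5D (s5pt 1 0) (s5pt (-1) 0) ≤ gammaOn s5f s5D s5Ω := by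
      apply le_csSup s5bddAbove
      exact ⟨s5pt 1 0, hQ, s5pt (-1) 0, hP, hne, rfl⟩
    have hnum : (27/25 : ℝ) < 128/113 := by norm_num
    linarith
end
end
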